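/- arXiv:1910.04360 — 5 statements merged into one kernel-verified Lean document; each statement's English description precedes it below -/
import Mathlib

section
/- Let (E, 𝓘) be a set-system and let (U, V) be a partition of E. If the relation ∼_U has at most q equivalence classes, then the relation ∼_V has at most 2^q equivalence classes. -/
open scoped Classical

/-- A set-system: a finite ground set `E` together with a family `Ind` of subsets of `E`,
called the independent sets. -/
structure SetSystem (α : Type) where
  E : Finset α
  Ind : Set (Finset α)
  ind_subset : ∀ X ∈ Ind, X ⊆ E

namespace SetSystem

variable {α : Type}

/-- The relation `X ∼_U X'`: for every `Z ⊆ E − U`, `X ∪ Z` is independent iff `X' ∪ Z` is. -/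
def Eqv (S : SetSystem α) (U : Finset α) (X X' : Finset α) : Prop :=
  ∀ Z : Finset α, Z ⊆ S.E \ U → ((X ∪ Z) ∈ S.Ind ↔ (X' ∪ Z) ∈ S.Ind)

/-- `∼_U` as a setoid on the subsets of `U`. -/
def eqvSetoid (S : SetSystem α) (U : Finset α) : Setoid {X : Finset α // X ⊆ U} where
  r X X' := S.Eqv U X.1 X'.1
  iseqv := ⟨fun _ _ _ => Iff.rfl, fun h Z hZ => (h Z hZ).symm,
    fun h h' Z hZ => (h Z hZ).trans (h' Z hZ)⟩

/-- The number of equivalence classes of `∼_U` on the subsets of `U`. -/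
noncomputable def numClasses (S : SetSystem α) (U : Finset α) : ℕ :=
  Nat.card (Quotient (S.eqvSetoid U))

end SetSystem

/-- A decomposition of a finite ground set `E`: a subcubic tree (every vertex has degree
one or three) together with a bijection from `E` to the set of leaves (degree-one vertices). -/
structure Decomp (α : Type) (E : Finset α) where
  V : Type
  [fintypeV : Fintype V]
  [decEqV : DecidableEq V]
  G : SimpleGraph V
  [decAdj : DecidableRel G.Adj]
  isTree : G.IsTree
  subcubic : ∀ v : V, G.degree v = 1 ∨ G.degree v = 3
  leaf : α → V
  leaf_degree : ∀ a ∈ E, G.degree (leaf a) = 1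
  leaf_injOn : Set.InjOn leaf ↑E
  leaf_surj : ∀ v : V, G.degree v = 1 → ∃ a ∈ E, leaf a = v

namespace Decomp

attribute [instance] fintypeV decEqV decAdj

variable {α : Type} {E : Finset α}

/-- The set `U ⊆ E` is displayed by an edge `uv` of the decomposition: it consists of those
elements of `E` whose leaf lies in the component of `T − uv` containing `u`. -/
def Displays (D : Decomp α E) (U : Finset α) : Prop :=
  U ⊆ E ∧ ∃ u v : D.V, D.G.Adj u v ∧
    ∀ a ∈ E, (a ∈ U ↔ (D.G.deleteEdges {s(u, v)}).Reachable (D.leaf a) u)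

end Decomp

namespace SetSystem

variable {α : Type}

/-- The decomposition-width of a set-system: the least `k` such that some decomposition has
all displayed sets `U` with at most `k` equivalence classes under `∼_U`. -/
noncomputable def dw (S : SetSystem α) : ℕ :=
  sInf {k : ℕ | ∃ D : Decomp α S.E, ∀ U : Finset α, D.Displays U → S.numClasses U ≤ k}

end SetSystem

namespace Matroid

variable {α : Type}

/-- The set-system of independent sets of a matroid on a finite type. -/
noncomputable def toSetSystem [Fintype α] (M : Matroid α) : SetSystem α where
  E := M.E.toFinite.toFinset
  Ind := {X : Finset α | M.Indep ↑X}
  ind_subset := fun _X hX _a ha =>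
    (Set.Finite.mem_toFinset _).2 (hX.subset_ground (Finset.mem_coe.2 ha))

/-- The decomposition-width of a matroid. -/
noncomputable def dw [Fintype α] (M : Matroid α) : ℕ := M.toSetSystem.dw

/-- The rank of a set in a matroid: the largest size of an independent subset. -/
noncomputable def rank [Fintype α] (M : Matroid α) (U : Set α) : ℕ :=
  sSup {n : ℕ | ∃ X : Finset α, ↑X ⊆ U ∧ M.Indep ↑X ∧ X.card = n}

/-- The connectivity function `λ_M(U) = r(U) + r(E − U) − r(M)`. -/
noncomputable def lambda [Fintype α] (M : Matroid α) (U : Set α) : ℕ :=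
  M.rank U + M.rank (M.E \ U) - M.rank M.E

/-- The branch-width of a matroid: the least `k` such that some decomposition of the ground
set has `λ_M(U) + 1 ≤ k` for every displayed set `U`. -/
noncomputable def bw [Fintype α] (M : Matroid α) : ℕ :=
  sInf {k : ℕ | ∃ D : Decomp α M.toSetSystem.E,
    ∀ U : Finset α, D.Displays U → M.lambda ↑U + 1 ≤ k}

/-- Deletion of a set of elements from a matroid. -/
def del (M : Matroid α) (D : Set α) : Matroid α := M ↾ (M.E \ D)

/-- Contraction of a set of elements in a matroid, defined via duality. -/
def con (M : Matroid α) (C : Set α) : Matroid α := (M✶ ↾ (M.E \ C))✶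

/-- `N` is a minor of `M`: `N` is obtained from `M` by contractions and deletions. -/
def IsMinorOf (N M : Matroid α) : Prop :=
  ∃ C D : Set α, C ⊆ M.E ∧ D ⊆ M.E ∧ Disjoint C D ∧ N = (M.con C).del D

/-- A pigeonhole class of matroids: every subclass of bounded branch-width has bounded
decomposition-width. -/
def PigeonholeClass [Fintype α] (𝓜 : Set (Matroid α)) : Prop :=
  ∀ lam : ℕ, 0 < lam → ∃ ρ : ℕ, ∀ M ∈ 𝓜, M.bw ≤ lam → M.dw ≤ ρ

end Matroid

/-- A `Σ`-tree: a finite full binary tree with `Γ`-labelled vertices. -/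
inductive STree (Γ : Type) : Type
  | leaf : Γ → STree Γ
  | node : Γ → STree Γ → STree Γ → STree Γ

/-- A tree automaton with alphabet `Γ`, state set `Q`, accepting states `accept`, and
(partial) transition rules `δ0` and `δ2`. -/
structure TreeAut (Γ : Type) (Q : Type) where
  accept : Finset Q
  δ0 : Γ → Option (Finset Q)
  δ2 : Γ → Q → Q → Option (Finset Q)

namespace STree

variable {Γ : Type}

/-- The number of leaves of a tree. -/
def leafCount : STree Γ → ℕ
  | .leaf _ => 1
  | .node _ l r => l.leafCount + r.leafCount

/-- `Subtree s t` means `s` is the subtree of `t` rooted at one of the vertices of `t`. -/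
inductive Subtree : STree Γ → STree Γ → Prop
  | refl (t : STree Γ) : Subtree t t
  | left {s l r : STree Γ} {a : Γ} : Subtree s l → Subtree s (.node a l r)
  | right {s l r : STree Γ} {a : Γ} : Subtree s r → Subtree s (.node a l r)

/-- Relabel the vertices of a tree: each leaf label is transformed by `f` applied to its
left-to-right index (offset by the second argument), internal labels by `g`. -/
def relabel {Γ' : Type} (f : ℕ → Γ → Γ') (g : Γ → Γ') : STree Γ → ℕ → STree Γ'
  | .leaf a, k => .leaf (f k a)
  | .node a l r, k => .node (g a) (l.relabel f g k) (r.relabel f g (k + l.leafCount))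

end STree

namespace TreeAut

variable {Γ Q : Type}

/-- The run of a tree automaton on a `Σ`-tree, computed bottom-up: a leaf receives
`δ0` of its label, an internal vertex the union of `δ2` over pairs of states at its
children (the empty set if any needed transition is undefined). -/
noncomputable def run (A : TreeAut Γ Q) : STree Γ → Finset Q
  | .leaf a => (A.δ0 a).getD ∅
  | .node a l r =>
      if ∀ qL ∈ A.run l, ∀ qR ∈ A.run r, (A.δ2 a qL qR).isSome then
        (A.run l).biUnion fun qL => (A.run r).biUnion fun qR => (A.δ2 a qL qR).getD ∅
      else ∅

/-- The automaton accepts a tree if the set of states assigned to the root contains an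
accepting state. -/
def Accepts (A : TreeAut Γ Q) (t : STree Γ) : Prop :=
  ∃ q ∈ A.run t, q ∈ A.accept

/-- A deterministic automaton: every image of `δ0` and `δ2` is a singleton. -/
def Deterministic (A : TreeAut Γ Q) : Prop :=
  (∀ a s, A.δ0 a = some s → s.card = 1) ∧
    (∀ a q₁ q₂ s, A.δ2 a q₁ q₂ = some s → s.card = 1)

end TreeAut

/-- The alphabet `Σ ∪ Σ × {0,1}^I`. -/
abbrev EncAlph (Γ : Type) (I : Finset ℕ) : Type := Γ ⊕ Γ × ({j // j ∈ I} → Bool)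

/-- `enc(T, σ, φ, {Y_j}_{j ∈ I})`: relabel each leaf `v` of the tree with `(σ(v), s)`, where
`s(j) = 1` iff `φ⁻¹(v) ∈ Y_j`; internal vertices keep their labels. -/
noncomputable def enc {α Γ : Type} (E : Finset α) (t : STree Γ)
    (φ : {a // a ∈ E} ≃ Fin t.leafCount) (I : Finset ℕ)
    (Y : {j // j ∈ I} → Finset α) : STree (EncAlph Γ I) :=
  t.relabel
    (fun k a => Sum.inr (a, fun j =>
      if h : k < t.leafCount then
        decide ((φ.symm ⟨k, h⟩ : {a // a ∈ E}).1 ∈ Y j) else false))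
    Sum.inl 0

/-- An `I`-ary automaton: `δ0` is defined only on leaf labels from `Σ × {0,1}^I`. -/
def TreeAut.IsIary {Γ Q : Type} (I : Finset ℕ) (A : TreeAut (EncAlph Γ I) Q) : Prop :=
  ∀ a : Γ, A.δ0 (Sum.inl a) = none

/-- The set-system `M(A, T, σ, φ)` determined by an `{i}`-ary automaton `A` and a parse
tree: a subset `Y ⊆ E` is independent iff `A` accepts `enc(T, σ, φ, {Y})`. -/
noncomputable def systemOf {α Γ Q : Type} (i : ℕ) (A : TreeAut (EncAlph Γ {i}) Q)
    (E : Finset α) (t : STree Γ) (φ : {a // a ∈ E} ≃ Fin t.leafCount) : SetSystem α where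
  E := E
  Ind := {Y : Finset α | Y ⊆ E ∧ A.Accepts (enc E t φ {i} fun _ => Y)}
  ind_subset := fun _ hY => hY.1

/-- A class of set-systems is automatic: there is a single `{i}`-ary tree automaton which
recognises independence in every member, via a suitable parse tree for each member. -/
def Automatic {α : Type} (𝓜 : Set (SetSystem α)) : Prop :=
  ∃ (Γ : Type) (_ : Fintype Γ) (Q : Type) (_ : Fintype Q) (i : ℕ)
    (A : TreeAut (EncAlph Γ {i}) Q), A.IsIary {i} ∧
      ∀ S ∈ 𝓜, ∃ (t : STree Γ) (φ : {a // a ∈ S.E} ≃ Fin t.leafCount),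
        S = systemOf i A S.E t φ

/-- Formulas of counting monadic second-order logic `CMS₀`, with set variables `X_n`:
atomic formulas `Ind(X_i)`, `X_i ⊆ X_j` and `|X_i|_{p,q}`, closed under `¬`, `∧`, `∃`. -/
inductive CMS0 : Type
  | ind : ℕ → CMS0
  | subset : ℕ → ℕ → CMS0
  | card : ℕ → ℕ → ℕ → CMS0
  | not : CMS0 → CMS0
  | and : CMS0 → CMS0 → CMS0
  | ex : ℕ → CMS0 → CMS0

namespace CMS0

/-- The free variables of a `CMS₀` formula. -/
def free : CMS0 → Finset ℕ
  | .ind i => {i}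
  | .subset i j => {i, j}
  | .card i _ _ => {i}
  | .not φ => φ.free
  | .and φ ψ => φ.free ∪ ψ.free
  | .ex i φ => φ.free.erase i

/-- Satisfaction of a `CMS₀` formula by a set-system under an interpretation `θ` assigning
subsets of the ground set to variables. -/
def Sat {α : Type} (S : SetSystem α) (θ : ℕ → Finset α) : CMS0 → Prop
  | .ind i => θ i ∈ S.Ind
  | .subset i j => θ i ⊆ θ j
  | .card i p q => (θ i).card % q = p
  | .not φ => ¬ Sat S θ φ
  | .and φ ψ => Sat S θ φ ∧ Sat S θ ψ
  | .ex i φ => ∃ Y : Finset α, Y ⊆ S.E ∧ Sat S (Function.update θ i Y) φ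

end CMS0
/-- Proposition `shadow`: if `(U, V)` partitions `E` and `∼_U` has at most
`q` equivalence classes, then `∼_V` has at most `2 ^ q` equivalence classes. -/
theorem statement_1 {α : Type} (S : SetSystem α) (U V : Finset α)
    (hdisj : Disjoint U V) (hpart : U ∪ V = S.E) (q : ℕ)
    (hU : S.numClasses U ≤ q) :
    S.numClasses V ≤ 2 ^ q := by
  classical
  have hVE : V ⊆ S.E \ U := by
    intro a ha
    refine Finset.mem_sdiff.2 ⟨?_, fun h => Finset.disjoint_left.1 hdisj h ha⟩
    rw [← hpart]; exact Finset.mem_union_right _ ha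
  have hEVU : S.E \ V ⊆ U := by
    intro a ha
    have h := Finset.mem_sdiff.1 ha
    rw [← hpart] at h
    rcases Finset.mem_union.1 h.1 with h' | h'
    · exact h'
    · exact absurd h' h.2
  -- the map from V-classes to sets of U-classes
  have hwell : ∀ (Y : {X : Finset α // X ⊆ V}) (X X' : {X : Finset α // X ⊆ U}),
      (S.eqvSetoid U).r X X' → ((X.1 ∪ Y.1) ∈ S.Ind) = ((X'.1 ∪ Y.1) ∈ S.Ind) := by
    intro Y X X' h
    exact propext (h Y.1 (Y.2.trans hVE))
  let F : Quotient (S.eqvSetoid V) → (Quotient (S.eqvSetoid U) → Prop) :=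
    Quotient.lift
      (fun Y => Quotient.lift (fun X : {X : Finset α // X ⊆ U} => (X.1 ∪ Y.1) ∈ S.Ind)
        (hwell Y))
      (by
        intro Y Y' hYY'
        funext c
        induction c using Quotient.ind with
        | _ X =>
          simp only [Quotient.lift_mk]
          rw [Finset.union_comm X.1 Y.1, Finset.union_comm X.1 Y'.1]
          exact propext (hYY' X.1 (X.2.trans (by
            intro a ha
            refine Finset.mem_sdiff.2 ⟨?_, fun h => Finset.disjoint_left.1 hdisj ha h⟩
            rw [← hpart]; exact Finset.mem_union_left _ ha))))
  have hinj : Function.Injective F := by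
    intro y y' h
    induction y using Quotient.ind with
    | _ Y =>
    induction y' using Quotient.ind with
    | _ Y' =>
      refine Quotient.sound ?_
      intro Z hZ
      have hZU : Z ⊆ U := fun a ha => hEVU (hZ ha)
      have := congrFun h (Quotient.mk _ (⟨Z, hZU⟩ : {X : Finset α // X ⊆ U}))
      simp only [F, Quotient.lift_mk] at this
      rw [Finset.union_comm Y.1 Z, Finset.union_comm Y'.1 Z]
      exact this.to_iff
  have h1 : S.numClasses V ≤ Nat.card (Quotient (S.eqvSetoid U) → Prop) :=
    Nat.card_le_card_of_injective F hinj
  rw [Nat.card_fun] at h1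
  have h2 : Nat.card Prop = 2 := by
    rw [Nat.card_eq_of_equiv_fin (Equiv.propEquivBool.trans finTwoEquiv.symm)]
  rw [h2] at h1
  exact h1.trans (Nat.pow_le_pow_right (by norm_num) hU)
end

section
/- Let x be an element of a finite matroid M. Then dw(M \ x) ≤ dw(M), where M \ x denotes the matroid obtained by deleting x. -/
open scoped Classical

section Helpers

open SimpleGraph Finset

lemma reachable_map {V W : Type} {A : SimpleGraph V} {B : SimpleGraph W} (f : V → W)
    (h : ∀ u v, A.Adj u v → B.Reachable (f u) (f v)) {s t : V} (hr : A.Reachable s t) :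
    B.Reachable (f s) (f t) := by
  obtain ⟨p⟩ := hr
  induction p with
  | nil => exact Reachable.refl _
  | cons ha _ ih => exact (h _ _ ha).trans ih

lemma two_le_card_of_decomp {α : Type} {E : Finset α} (D : Decomp α E) : 2 ≤ E.card := by
  classical
  have hconn := D.isTree.isConnected
  obtain ⟨v0⟩ := hconn.nonempty
  have hdeg := D.subcubic
  have hn2 : 2 ≤ Fintype.card D.V := by
    have h1 : 1 ≤ D.G.degree v0 := by rcases hdeg v0 with h | h <;> omega
    have := D.G.degree_lt_card_verts v0
    omega
  -- handshake
  have hhs : ∑ v, D.G.degree v = 2 * D.G.edgeFinset.card :=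
    D.G.sum_degrees_eq_twice_card_edges
  have hte : D.G.edgeFinset.card + 1 = Fintype.card D.V := D.isTree.card_edgeFinset
  set L : Finset D.V := Finset.univ.filter (fun v => D.G.degree v = 1) with hL
  have hsplit : ∑ v, D.G.degree v
      = ∑ v ∈ L, D.G.degree v + ∑ v ∈ Finset.univ.filter (fun v => ¬ D.G.degree v = 1), D.G.degree v :=
    (Finset.sum_filter_add_sum_filter_not _ _ _).symm
  have h1 : ∑ v ∈ L, D.G.degree v = L.card := by
    rw [Finset.sum_congr rfl (fun v hv => (Finset.mem_filter.mp hv).2)]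
    simp [hL]
  have h3 : ∑ v ∈ Finset.univ.filter (fun v => ¬ D.G.degree v = 1), D.G.degree v
      = 3 * (Fintype.card D.V - L.card) := by
    have : ∀ v ∈ Finset.univ.filter (fun v => ¬ D.G.degree v = 1), D.G.degree v = 3 := by
      intro v hv
      rcases hdeg v with h | h
      · exact absurd h (Finset.mem_filter.mp hv).2
      · exact h
    rw [Finset.sum_congr rfl this, Finset.sum_const, smul_eq_mul, mul_comm]
    congr 1
    rw [Finset.filter_not, Finset.card_sdiff_of_subset (Finset.filter_subset _ _)]
    simp [hL]
  have hLle : L.card ≤ Fintype.card D.V := by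
    simpa using Finset.card_le_card (Finset.filter_subset _ (Finset.univ : Finset D.V))
  have key : L.card + 3 * (Fintype.card D.V - L.card) = 2 * (Fintype.card D.V - 1) := by
    rw [← h3, ← h1, ← hsplit, hhs, ← hte]
    simp
  have hL2 : 2 ≤ L.card := by omega
  obtain ⟨u, hu, v, hv, huv⟩ := Finset.one_lt_card.mp (by omega : 1 < L.card)
  obtain ⟨au, hau, hau2⟩ := D.leaf_surj u (Finset.mem_filter.mp hu).2
  obtain ⟨av, hav, hav2⟩ := D.leaf_surj v (Finset.mem_filter.mp hv).2
  have hne : au ≠ av := fun h => huv (by rw [← hau2, ← hav2, h])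
  exact Finset.one_lt_card.mpr ⟨au, hau, av, hav, hne⟩

end Helpers

lemma numClasses_erase_le {α : Type} [Fintype α] (S S' : SetSystem α) (x : α)
    (hE : S'.E = S.E.erase x)
    (hInd : ∀ X : Finset α, X ∈ S'.Ind ↔ X ∈ S.Ind ∧ x ∉ X)
    (U : Finset α) :
    S'.numClasses (U.erase x) ≤ S.numClasses U := by
  classical
  set U' := U.erase x with hU'
  let g : {X : Finset α // X ⊆ U'} → Quotient (S.eqvSetoid U) :=
    fun X => Quotient.mk (S.eqvSetoid U) ⟨X.1, X.2.trans (Finset.erase_subset _ _)⟩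
  let f : {X : Finset α // X ⊆ U'} → Quotient (S'.eqvSetoid U') :=
    fun X => Quotient.mk (S'.eqvSetoid U') X
  have key : ∀ X Y, g X = g Y → f X = f Y := by
    intro X Y hg
    have hXY : S.Eqv U X.1 Y.1 := Quotient.eq.mp hg
    refine Quotient.sound ?_
    intro Z hZ
    have hZ' : Z ⊆ S.E \ U := by
      intro z hz
      have := hZ hz
      rw [Finset.mem_sdiff, hE] at this
      rw [Finset.mem_sdiff]
      obtain ⟨hz1, hz2⟩ := this
      obtain ⟨hzx, hzE⟩ := Finset.mem_erase.mp hz1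
      refine ⟨hzE, fun hzU => hz2 ?_⟩
      exact Finset.mem_erase.mpr ⟨hzx, hzU⟩
    have hxZ : x ∉ Z := by
      intro hxZ
      have := hZ hxZ
      rw [Finset.mem_sdiff, hE, Finset.mem_erase] at this
      exact this.1.1 rfl
    have hxX : x ∉ X.1 ∪ Z := by
      simp only [Finset.mem_union]
      rintro (h | h)
      · exact (Finset.mem_erase.mp (X.2 h)).1 rfl
      · exact hxZ h
    have hxY : x ∉ Y.1 ∪ Z := by
      simp only [Finset.mem_union]
      rintro (h | h)
      · exact (Finset.mem_erase.mp (Y.2 h)).1 rfl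
      · exact hxZ h
    rw [hInd, hInd]
    constructor
    · rintro ⟨h1, -⟩; exact ⟨(hXY Z hZ').mp h1, hxY⟩
    · rintro ⟨h1, -⟩; exact ⟨(hXY Z hZ').mpr h1, hxX⟩
  have hfsurj : Function.Surjective f := Quotient.mk''_surjective
  -- build h : Q → Q'
  have hQ'ne : Nonempty (Quotient (S'.eqvSetoid U')) := ⟨f ⟨∅, Finset.empty_subset _⟩⟩
  let h : Quotient (S.eqvSetoid U) → Quotient (S'.eqvSetoid U') := fun c =>
    if hc : ∃ X, g X = c then f hc.choose else f ⟨∅, Finset.empty_subset _⟩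
  have hsurj : Function.Surjective h := by
    intro q'
    obtain ⟨X, rfl⟩ := hfsurj q'
    refine ⟨g X, ?_⟩
    have hc : ∃ Y, g Y = g X := ⟨X, rfl⟩
    simp only [h, dif_pos hc]
    exact key _ _ hc.choose_spec
  have : Finite (Quotient (S.eqvSetoid U)) := Quotient.finite _
  exact Nat.card_le_card_of_surjective h hsurj

section DelSurgery

open SimpleGraph

variable {V : Type} [Fintype V] [DecidableEq V]

/-- Context for deleting a leaf `ℓ` with neighbour `w` of degree 3 whose other
neighbours are `a` and `b`. -/
structure DelCtx (G : SimpleGraph V) (ℓ w a b : V) : Prop where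
  acyc : G.IsAcyclic
  nl : G.neighborSet ℓ = {w}
  nw : G.neighborSet w = {ℓ, a, b}
  hab : a ≠ b
  hla : a ≠ ℓ
  hlb : b ≠ ℓ
  nadj : ¬ G.Adj a b

namespace DelCtx

variable {G : SimpleGraph V} {ℓ w a b : V} (C : DelCtx G ℓ w a b)

include C

lemma adj_wl : G.Adj w ℓ := by
  have : ℓ ∈ G.neighborSet w := by rw [C.nw]; simp
  exact this

lemma adj_wa : G.Adj w a := by
  have : a ∈ G.neighborSet w := by rw [C.nw]; simp
  exact this

lemma adj_wb : G.Adj w b := by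
  have : b ∈ G.neighborSet w := by rw [C.nw]; simp
  exact this

lemma haw : a ≠ w := fun h => G.irrefl (h ▸ C.adj_wa)
lemma hbw : b ≠ w := fun h => G.irrefl (h ▸ C.adj_wb)
lemma hlw : ℓ ≠ w := fun h => G.irrefl (h ▸ C.adj_wl)

lemma aOK : a ≠ ℓ ∧ a ≠ w := ⟨C.hla, C.haw⟩
lemma bOK : b ≠ ℓ ∧ b ≠ w := ⟨C.hlb, C.hbw⟩

lemma adj_l {z : V} (h : G.Adj ℓ z) : z = w := by
  have : z ∈ G.neighborSet ℓ := h
  rwa [C.nl, Set.mem_singleton_iff] at this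

lemma adj_w {z : V} (h : G.Adj w z) : z = ℓ ∨ z = a ∨ z = b := by
  have : z ∈ G.neighborSet w := h
  rwa [C.nw] at this

lemma bridge {u v : V} (h : G.Adj u v) : ¬ (G.deleteEdges {s(u, v)}).Reachable u v := by
  have := (isAcyclic_iff_forall_adj_isBridge.mp C.acyc) h
  rw [isBridge_iff] at this
  exact this

end DelCtx

/-- The tree after removing leaf `ℓ` and suppressing `w`. -/
def delGraph (G : SimpleGraph V) (ℓ w a b : V) (hab : a ≠ b) :
    SimpleGraph {v : V // v ≠ ℓ ∧ v ≠ w} where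
  Adj u v := G.Adj ↑u ↑v ∨ (↑u = a ∧ ↑v = b) ∨ (↑u = b ∧ ↑v = a)
  symm := by
    constructor
    rintro u v (h | ⟨h1, h2⟩ | ⟨h1, h2⟩)
    · exact Or.inl h.symm
    · exact Or.inr (Or.inr ⟨h2, h1⟩)
    · exact Or.inr (Or.inl ⟨h2, h1⟩)
  loopless := by
    constructor
    rintro u (h | ⟨h1, h2⟩ | ⟨h1, h2⟩)
    · exact G.irrefl h
    · exact hab (h1 ▸ h2 ▸ rfl)
    · exact hab (h2 ▸ h1 ▸ rfl)

namespace DelCtx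

variable {G : SimpleGraph V} {ℓ w a b : V} (C : DelCtx G ℓ w a b)

include C

/-- Forward transfer of reachability: from the old tree minus `d` to the new tree minus `d'`. -/
lemma fwd (d : Set (Sym2 V)) (d' : Set (Sym2 {v : V // v ≠ ℓ ∧ v ≠ w}))
    (hC1 : ∀ u v : {v : V // v ≠ ℓ ∧ v ≠ w},
      G.Adj ↑u ↑v → s((u : V), (v : V)) ∉ d → s(u, v) ∉ d')
    (hC2 : s(a, w) ∉ d → s(w, b) ∉ d → s((⟨a, C.aOK⟩ : {v : V // v ≠ ℓ ∧ v ≠ w}), ⟨b, C.bOK⟩) ∉ d') :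
    ∀ n : ℕ, ∀ s t : V, ∀ hs : s ≠ ℓ ∧ s ≠ w, ∀ ht : t ≠ ℓ ∧ t ≠ w,
      ∀ p : (G.deleteEdges d).Walk s t, p.length ≤ n →
      ((delGraph G ℓ w a b C.hab).deleteEdges d').Reachable ⟨s, hs⟩ ⟨t, ht⟩ := by
  intro n
  induction n using Nat.strong_induction_on with
  | _ n ih =>
  intro s t hs ht p hlen
  cases p with
  | nil => exact Reachable.refl _
  | @cons _ y _ h q =>
    rw [SimpleGraph.deleteEdges_adj] at h
    obtain ⟨hadj, hnd⟩ := h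
    by_cases hy : y = w
    · subst y
      -- s is adjacent to w, s ≠ ℓ, so s = a or s = b
      have hsab : s = a ∨ s = b := by
        rcases C.adj_w hadj.symm with h | h | h
        · exact absurd h hs.1
        · exact Or.inl h
        · exact Or.inr h
      cases q with
      | nil => exact absurd rfl ht.2
      | @cons _ z _ h2 r =>
        rw [SimpleGraph.deleteEdges_adj] at h2
        obtain ⟨hadj2, hnd2⟩ := h2
        by_cases hz : z = ℓ
        · subst z
          cases r with
          | nil => exact absurd rfl ht.1
          | @cons _ z2 _ h3 r2 =>
            rw [SimpleGraph.deleteEdges_adj] at h3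
            obtain ⟨hadj3, hnd3⟩ := h3
            have hz2 : z2 = w := C.adj_l hadj3
            subst z2
            have hstep : (G.deleteEdges d).Adj s w := by
              rw [SimpleGraph.deleteEdges_adj]; exact ⟨hadj, hnd⟩
            exact ih (r2.length + 1) (by simp at hlen ⊢; omega) s t hs ht
              (SimpleGraph.Walk.cons hstep r2) (by simp)
        · have hzab : z = a ∨ z = b := by
            rcases C.adj_w hadj2 with h | h | h
            · exact absurd h hz
            · exact Or.inl h
            · exact Or.inr h
          have hzOK : z ≠ ℓ ∧ z ≠ w := by
            rcases hzab with h | h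
            · exact h ▸ C.aOK
            · exact h ▸ C.bOK
          by_cases hzs : z = s
          · subst hzs
            exact ih r.length (by simp at hlen ⊢; omega) z t hs ht r le_rfl
          · -- {s, z} = {a, b}; use the new edge
            have hcase : (s = a ∧ z = b) ∨ (s = b ∧ z = a) := by
              rcases hsab with h1 | h1 <;> rcases hzab with h2 | h2
              · exact absurd (h1 ▸ h2 ▸ rfl : z = s) hzs
              · exact Or.inl ⟨h1, h2⟩
              · exact Or.inr ⟨h1, h2⟩
              · exact absurd (h1 ▸ h2 ▸ rfl : z = s) hzs
            have hnew : s((⟨a, C.aOK⟩ : {v : V // v ≠ ℓ ∧ v ≠ w}), ⟨b, C.bOK⟩) ∉ d' := by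
              apply hC2
              · rcases hcase with ⟨h1, h2⟩ | ⟨h1, h2⟩
                · rw [← h1]; exact hnd
                · rw [← h2, Sym2.eq_swap]; exact hnd2
              · rcases hcase with ⟨h1, h2⟩ | ⟨h1, h2⟩
                · rw [← h2]; exact hnd2
                · rw [← h1, Sym2.eq_swap]; exact hnd
            have hstep : ((delGraph G ℓ w a b C.hab).deleteEdges d').Adj ⟨s, hs⟩ ⟨z, hzOK⟩ := by
              rw [SimpleGraph.deleteEdges_adj]
              constructor
              · rcases hcase with ⟨h1, h2⟩ | ⟨h1, h2⟩
                · exact Or.inr (Or.inl ⟨h1, h2⟩)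
                · exact Or.inr (Or.inr ⟨h1, h2⟩)
              · rcases hcase with ⟨h1, h2⟩ | ⟨h1, h2⟩
                · have : (⟨s, hs⟩ : {v : V // v ≠ ℓ ∧ v ≠ w}) = ⟨a, C.aOK⟩ := by
                    simpa using h1
                  have h2' : (⟨z, hzOK⟩ : {v : V // v ≠ ℓ ∧ v ≠ w}) = ⟨b, C.bOK⟩ := by
                    simpa using h2
                  rw [this, h2']; exact hnew
                · have : (⟨s, hs⟩ : {v : V // v ≠ ℓ ∧ v ≠ w}) = ⟨b, C.bOK⟩ := by
                    simpa using h1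
                  have h2' : (⟨z, hzOK⟩ : {v : V // v ≠ ℓ ∧ v ≠ w}) = ⟨a, C.aOK⟩ := by
                    simpa using h2
                  rw [this, h2', Sym2.eq_swap]; exact hnew
            exact hstep.reachable.trans
              (ih r.length (by simp at hlen ⊢; omega) z t hzOK ht r le_rfl)
    · have hyl : y ≠ ℓ := by
        intro hyl
        exact hs.2 (C.adj_l (hyl ▸ hadj).symm)
      have hyOK : y ≠ ℓ ∧ y ≠ w := ⟨hyl, hy⟩
      have hstep : ((delGraph G ℓ w a b C.hab).deleteEdges d').Adj ⟨s, hs⟩ ⟨y, hyOK⟩ := by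
        rw [SimpleGraph.deleteEdges_adj]
        exact ⟨Or.inl hadj, hC1 ⟨s, hs⟩ ⟨y, hyOK⟩ hadj hnd⟩
      exact hstep.reachable.trans
        (ih q.length (by simp at hlen ⊢; omega) y t hyOK ht q le_rfl)

end DelCtx

end DelSurgery

section DelSurgery2

open SimpleGraph

variable {V : Type} [Fintype V] [DecidableEq V]

lemma sym2_ne_of_ne {x y p q : V} (h1 : x ≠ p) (h2 : x ≠ q) : s(x, y) ≠ s(p, q) := by
  intro h
  rcases Sym2.eq_iff.mp h with ⟨rfl, rfl⟩ | ⟨rfl, rfl⟩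
  · exact h1 rfl
  · exact h2 rfl

lemma sym2_val_eq {P : V → Prop} {p q u v : {x : V // P x}} 
    (h : s((p : V), (q : V)) = s((u : V), (v : V))) : s(p, q) = s(u, v) := by
  rw [Sym2.eq_iff] at h ⊢
  rcases h with ⟨h1, h2⟩ | ⟨h1, h2⟩
  · exact Or.inl ⟨Subtype.ext h1, Subtype.ext h2⟩
  · exact Or.inr ⟨Subtype.ext h1, Subtype.ext h2⟩

namespace DelCtx

variable {G : SimpleGraph V} {ℓ w a b : V} (C : DelCtx G ℓ w a b)

include C

lemma swap : DelCtx G ℓ w b a where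
  acyc := C.acyc
  nl := C.nl
  nw := by rw [C.nw]; ext z; simp; tauto
  hab := C.hab.symm
  hla := C.hlb
  hlb := C.hla
  nadj := fun h => C.nadj h.symm

lemma delGraph_comm : delGraph G ℓ w a b C.hab = delGraph G ℓ w b a C.hab.symm := by
  ext u v
  show _ ∨ _ ↔ _ ∨ _
  tauto

/-- Backward transfer of reachability. -/
lemma back (d : Set (Sym2 V)) (d' : Set (Sym2 {v : V // v ≠ ℓ ∧ v ≠ w}))
    (hD1 : ∀ p q : {v : V // v ≠ ℓ ∧ v ≠ w},
      G.Adj ↑p ↑q → s(p, q) ∉ d' → s((p : V), (q : V)) ∉ d)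
    (hD2 : s((⟨a, C.aOK⟩ : {v : V // v ≠ ℓ ∧ v ≠ w}), ⟨b, C.bOK⟩) ∉ d' →
      s(a, w) ∉ d ∧ s(w, b) ∉ d)
    {s t : {v : V // v ≠ ℓ ∧ v ≠ w}}
    (h : ((delGraph G ℓ w a b C.hab).deleteEdges d').Reachable s t) :
    (G.deleteEdges d).Reachable ↑s ↑t := by
  refine reachable_map Subtype.val (fun p q hpq => ?_) h
  rw [SimpleGraph.deleteEdges_adj] at hpq
  obtain ⟨hadj, hnd⟩ := hpq
  rcases hadj with hG | ⟨h1, h2⟩ | ⟨h1, h2⟩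
  · exact (SimpleGraph.deleteEdges_adj.mpr ⟨hG, hD1 p q hG hnd⟩).reachable
  · have hpa : p = (⟨a, C.aOK⟩ : {v : V // v ≠ ℓ ∧ v ≠ w}) := Subtype.ext h1
    have hqb : q = (⟨b, C.bOK⟩ : {v : V // v ≠ ℓ ∧ v ≠ w}) := Subtype.ext h2
    obtain ⟨ha, hb⟩ := hD2 (by rw [← hpa, ← hqb]; exact hnd)
    have step1 : (G.deleteEdges d).Adj a w :=
      SimpleGraph.deleteEdges_adj.mpr ⟨C.adj_wa.symm, ha⟩
    have step2 : (G.deleteEdges d).Adj w b :=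
      SimpleGraph.deleteEdges_adj.mpr ⟨C.adj_wb, hb⟩
    rw [h1, h2]
    exact step1.reachable.trans step2.reachable
  · have hpb : p = (⟨b, C.bOK⟩ : {v : V // v ≠ ℓ ∧ v ≠ w}) := Subtype.ext h1
    have hqa : q = (⟨a, C.aOK⟩ : {v : V // v ≠ ℓ ∧ v ≠ w}) := Subtype.ext h2
    obtain ⟨ha, hb⟩ := hD2 (by rw [← hpb, ← hqa, Sym2.eq_swap]; exact hnd)
    have step1 : (G.deleteEdges d).Adj b w :=
      SimpleGraph.deleteEdges_adj.mpr ⟨C.adj_wb.symm, by rwa [Sym2.eq_swap] at hb⟩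
    have step2 : (G.deleteEdges d).Adj w a :=
      SimpleGraph.deleteEdges_adj.mpr ⟨C.adj_wa, by rwa [Sym2.eq_swap] at ha⟩
    rw [h1, h2]
    exact step1.reachable.trans step2.reachable

end DelCtx

end DelSurgery2

section DelSurgery3

open SimpleGraph

variable {V : Type} [Fintype V] [DecidableEq V]

namespace DelCtx

variable {G : SimpleGraph V} {ℓ w a b : V} (C : DelCtx G ℓ w a b)

include C

lemma degree_delGraph [DecidableRel G.Adj]
    [DecidableRel (delGraph G ℓ w a b C.hab).Adj]
    (v : {v : V // v ≠ ℓ ∧ v ≠ w}) :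
    (delGraph G ℓ w a b C.hab).degree v = G.degree ↑v := by
  classical
  have adj_ne_l : ∀ u : V, G.Adj ↑v u → u ≠ ℓ := by
    intro u hadj h
    rw [h] at hadj
    exact v.2.2 (C.adj_l hadj.symm)
  rw [SimpleGraph.degree, SimpleGraph.degree, ← Finset.card_image_of_injective
    ((delGraph G ℓ w a b C.hab).neighborFinset v) Subtype.val_injective]
  by_cases hva : (v : V) = a
  · have himg : ((delGraph G ℓ w a b C.hab).neighborFinset v).image Subtype.val
        = insert b ((G.neighborFinset a).erase w) := by
      ext u
      simp only [Finset.mem_image, SimpleGraph.mem_neighborFinset, Finset.mem_insert,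
        Finset.mem_erase]
      constructor
      · rintro ⟨u', hu', rfl⟩
        rcases hu' with hG | ⟨h1, h2⟩ | ⟨h1, h2⟩
        · rw [hva] at hG
          exact Or.inr ⟨u'.2.2, hG⟩
        · exact Or.inl h2
        · exact absurd (hva ▸ h1 : a = b) C.hab
      · rintro (hub | ⟨huw, hadj⟩)
        · exact ⟨⟨b, C.bOK⟩, Or.inr (Or.inl ⟨hva, rfl⟩), hub.symm⟩
        · exact ⟨⟨u, adj_ne_l u (by rw [hva]; exact hadj), huw⟩,
            Or.inl (show G.Adj ↑v u by rw [hva]; exact hadj), rfl⟩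
    rw [himg, Finset.card_insert_of_notMem (by
      simp only [Finset.mem_erase, SimpleGraph.mem_neighborFinset]
      rintro ⟨-, hadj⟩
      exact C.nadj hadj),
      Finset.card_erase_of_mem (by
        rw [SimpleGraph.mem_neighborFinset]; exact C.adj_wa.symm)]
    have h1c : 1 ≤ (G.neighborFinset a).card := Finset.one_le_card.mpr
      ⟨w, by rw [SimpleGraph.mem_neighborFinset]; exact C.adj_wa.symm⟩
    rw [hva]
    omega
  · by_cases hvb : (v : V) = b
    · have himg : ((delGraph G ℓ w a b C.hab).neighborFinset v).image Subtype.val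
          = insert a ((G.neighborFinset b).erase w) := by
        ext u
        simp only [Finset.mem_image, SimpleGraph.mem_neighborFinset, Finset.mem_insert,
          Finset.mem_erase]
        constructor
        · rintro ⟨u', hu', rfl⟩
          rcases hu' with hG | ⟨h1, h2⟩ | ⟨h1, h2⟩
          · rw [hvb] at hG
            exact Or.inr ⟨u'.2.2, hG⟩
          · exact absurd (hvb ▸ h1 : b = a) C.hab.symm
          · exact Or.inl h2
        · rintro (hua | ⟨huw, hadj⟩)
          · exact ⟨⟨a, C.aOK⟩, Or.inr (Or.inr ⟨hvb, rfl⟩), hua.symm⟩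
          · exact ⟨⟨u, adj_ne_l u (by rw [hvb]; exact hadj), huw⟩,
              Or.inl (show G.Adj ↑v u by rw [hvb]; exact hadj), rfl⟩
      rw [himg, Finset.card_insert_of_notMem (by
        simp only [Finset.mem_erase, SimpleGraph.mem_neighborFinset]
        rintro ⟨-, hadj⟩
        exact C.nadj hadj.symm),
        Finset.card_erase_of_mem (by
          rw [SimpleGraph.mem_neighborFinset]; exact C.adj_wb.symm)]
      have h1c : 1 ≤ (G.neighborFinset b).card := Finset.one_le_card.mpr
        ⟨w, by rw [SimpleGraph.mem_neighborFinset]; exact C.adj_wb.symm⟩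
      rw [hvb]
      omega
    · have himg : ((delGraph G ℓ w a b C.hab).neighborFinset v).image Subtype.val
          = G.neighborFinset ↑v := by
        ext u
        simp only [Finset.mem_image, SimpleGraph.mem_neighborFinset]
        constructor
        · rintro ⟨u', hu', rfl⟩
          rcases hu' with hG | ⟨h1, h2⟩ | ⟨h1, h2⟩
          · exact hG
          · exact absurd h1 hva
          · exact absurd h1 hvb
        · intro hadj
          have huw : u ≠ w := by
            rintro rfl
            rcases C.adj_w hadj.symm with h | h | h
            · exact v.2.1 h
            · exact hva h
            · exact hvb h
          exact ⟨⟨u, adj_ne_l u hadj, huw⟩, Or.inl hadj, rfl⟩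
      rw [himg]

lemma delGraph_connected (hconn : G.Connected) :
    (delGraph G ℓ w a b C.hab).Connected := by
  have hne : Nonempty {v : V // v ≠ ℓ ∧ v ≠ w} := ⟨⟨a, C.aOK⟩⟩
  refine ⟨fun s t => ?_⟩
  have hp : (G.deleteEdges (∅ : Set (Sym2 V))).Reachable ↑s ↑t := by
    rw [SimpleGraph.deleteEdges_empty]
    exact hconn.preconnected ↑s ↑t
  obtain ⟨q⟩ := hp
  have hres := C.fwd ∅ ∅ (fun _ _ _ _ => Set.notMem_empty _)
    (fun _ _ => Set.notMem_empty _) q.length ↑s ↑t s.2 t.2 q le_rfl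
  rw [SimpleGraph.deleteEdges_empty] at hres
  exact hres

lemma acyclic_aux (u v : {v : V // v ≠ ℓ ∧ v ≠ w}) (h1 : (u : V) = a) (h2 : (v : V) = b)
    (hreach : ((delGraph G ℓ w a b C.hab).deleteEdges {s(u, v)}).Reachable u v) : False := by
  have hres := C.back {s(w, b)} {s(u, v)}
    (fun p q _ _ hmem =>
      (sym2_ne_of_ne (Ne.symm p.2.2) (Ne.symm q.2.2)).symm (Set.mem_singleton_iff.mp hmem))
    (fun hnd => (hnd (Set.mem_singleton_iff.mpr
      (sym2_val_eq (p := ⟨a, C.aOK⟩) (q := ⟨b, C.bOK⟩) (by rw [h1, h2])))).elim)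
    hreach
  rw [h1, h2] at hres
  have hwa : (G.deleteEdges {s(w, b)}).Adj w a := by
    rw [SimpleGraph.deleteEdges_adj]
    refine ⟨C.adj_wa, ?_⟩
    rw [Set.mem_singleton_iff]
    intro hh
    rcases Sym2.eq_iff.mp hh with ⟨-, hba⟩ | ⟨hwb, -⟩
    · exact C.hab hba
    · exact C.hbw hwb.symm
  exact C.bridge C.adj_wb (hwa.reachable.trans hres)

lemma delGraph_acyclic : (delGraph G ℓ w a b C.hab).IsAcyclic := by
  rw [isAcyclic_iff_forall_adj_isBridge]
  intro u v hadj
  rw [isBridge_iff]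
  refine fun hreach => ?_
  have hreach' : ((delGraph G ℓ w a b C.hab).deleteEdges {s(u, v)}).Reachable u v := hreach
  rcases hadj with hG | ⟨h1, h2⟩ | ⟨h1, h2⟩
  · have hres := C.back {s((u : V), (v : V))} {s(u, v)}
      (fun p q _ hnd => fun hmem => hnd (by
        rw [Set.mem_singleton_iff] at hmem ⊢
        exact sym2_val_eq hmem))
      (fun _ => ⟨by
          rw [Set.mem_singleton_iff, Sym2.eq_swap]
          exact sym2_ne_of_ne (Ne.symm u.2.2) (Ne.symm v.2.2), by
          rw [Set.mem_singleton_iff]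
          exact sym2_ne_of_ne (Ne.symm u.2.2) (Ne.symm v.2.2)⟩)
      hreach'
    exact C.bridge hG hres
  · exact C.acyclic_aux u v h1 h2 hreach'
  · rw [C.delGraph_comm] at hreach'
    exact C.swap.acyclic_aux u v h1 h2 hreach'

lemma delGraph_isTree (hconn : G.Connected) : (delGraph G ℓ w a b C.hab).IsTree :=
  ⟨C.delGraph_connected hconn, C.delGraph_acyclic⟩

end DelCtx

end DelSurgery3

section DelSurgery4

open SimpleGraph

variable {V : Type} [Fintype V] [DecidableEq V]

lemma sym2_val_congr {P : V → Prop} {p q u v : {x : V // P x}}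
    (h : s(p, q) = s(u, v)) : s((p : V), (q : V)) = s((u : V), (v : V)) := by
  rcases Sym2.eq_iff.mp h with ⟨h1, h2⟩ | ⟨h1, h2⟩
  · rw [Sym2.eq_iff]; exact Or.inl ⟨congrArg Subtype.val h1, congrArg Subtype.val h2⟩
  · rw [Sym2.eq_iff]; exact Or.inr ⟨congrArg Subtype.val h1, congrArg Subtype.val h2⟩

namespace DelCtx

variable {G : SimpleGraph V} {ℓ w a b : V} (C : DelCtx G ℓ w a b)

include C

lemma old_edge_iff (u v : {v : V // v ≠ ℓ ∧ v ≠ w}) (hG : G.Adj ↑u ↑v)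
    (L : V) (hL : L ≠ ℓ ∧ L ≠ w) :
    ((delGraph G ℓ w a b C.hab).deleteEdges {s(u, v)}).Reachable ⟨L, hL⟩ u ↔
      (G.deleteEdges {s((u : V), (v : V))}).Reachable L ↑u := by
  constructor
  · intro h
    exact C.back {s((u : V), (v : V))} {s(u, v)}
      (fun p q _ hnd hmem => hnd (Set.mem_singleton_iff.mpr
        (sym2_val_eq (Set.mem_singleton_iff.mp hmem))))
      (fun _ => ⟨by
          rw [Set.mem_singleton_iff, Sym2.eq_swap]
          exact sym2_ne_of_ne (Ne.symm u.2.2) (Ne.symm v.2.2), by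
          rw [Set.mem_singleton_iff]
          exact sym2_ne_of_ne (Ne.symm u.2.2) (Ne.symm v.2.2)⟩)
      h
  · intro h
    obtain ⟨p⟩ := h
    exact C.fwd {s((u : V), (v : V))} {s(u, v)}
      (fun p q _ hnd hmem => hnd (Set.mem_singleton_iff.mpr
        (sym2_val_congr (Set.mem_singleton_iff.mp hmem))))
      (fun _ _ hmem => by
        have hvals : s(a, b) = s((u : V), (v : V)) :=
          sym2_val_congr (p := ⟨a, C.aOK⟩) (q := ⟨b, C.bOK⟩) (Set.mem_singleton_iff.mp hmem)
        rcases Sym2.eq_iff.mp hvals with ⟨h1, h2⟩ | ⟨h1, h2⟩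
        · rw [← h1, ← h2] at hG
          exact C.nadj hG
        · rw [← h1, ← h2] at hG
          exact C.nadj hG.symm)
      p.length L ↑u hL u.2 p le_rfl

lemma new_edge_iff (L : V) (hL : L ≠ ℓ ∧ L ≠ w) :
    ((delGraph G ℓ w a b C.hab).deleteEdges
        {s((⟨a, C.aOK⟩ : {v : V // v ≠ ℓ ∧ v ≠ w}), ⟨b, C.bOK⟩)}).Reachable ⟨L, hL⟩ ⟨a, C.aOK⟩ ↔
      (G.deleteEdges {s(w, b)}).Reachable L w := by
  have hwa_del : (G.deleteEdges {s(w, b)}).Adj w a := by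
    rw [SimpleGraph.deleteEdges_adj]
    refine ⟨C.adj_wa, fun hmem => ?_⟩
    rcases Sym2.eq_iff.mp (Set.mem_singleton_iff.mp hmem) with ⟨-, hab'⟩ | ⟨hwb, -⟩
    · exact C.hab hab'
    · exact C.hbw hwb.symm
  constructor
  · intro h
    have hres := C.back {s(w, b)} {s((⟨a, C.aOK⟩ : {v : V // v ≠ ℓ ∧ v ≠ w}), ⟨b, C.bOK⟩)}
      (fun p q _ _ hmem =>
        (sym2_ne_of_ne (Ne.symm p.2.2) (Ne.symm q.2.2)).symm (Set.mem_singleton_iff.mp hmem))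
      (fun hnd => (hnd rfl).elim)
      h
    exact hres.trans hwa_del.symm.reachable
  · intro h
    obtain ⟨p⟩ := h.trans hwa_del.reachable
    exact C.fwd {s(w, b)} {s((⟨a, C.aOK⟩ : {v : V // v ≠ ℓ ∧ v ≠ w}), ⟨b, C.bOK⟩)}
      (fun p q hadj _ hmem => by
        have hvals : s((p : V), (q : V)) = s(a, b) :=
          sym2_val_congr (u := ⟨a, C.aOK⟩) (v := ⟨b, C.bOK⟩) (Set.mem_singleton_iff.mp hmem)
        rcases Sym2.eq_iff.mp hvals with ⟨h1, h2⟩ | ⟨h1, h2⟩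
        · rw [h1, h2] at hadj
          exact C.nadj hadj
        · rw [h1, h2] at hadj
          exact C.nadj hadj.symm)
      (fun _ hnd => (hnd rfl).elim)
      p.length L a hL C.aOK p le_rfl

lemma new_edge_iff' (L : V) (hL : L ≠ ℓ ∧ L ≠ w) :
    ((delGraph G ℓ w a b C.hab).deleteEdges
        {s((⟨b, C.bOK⟩ : {v : V // v ≠ ℓ ∧ v ≠ w}), ⟨a, C.aOK⟩)}).Reachable ⟨L, hL⟩ ⟨b, C.bOK⟩ ↔
      (G.deleteEdges {s(w, a)}).Reachable L w := by
  have hwb_del : (G.deleteEdges {s(w, a)}).Adj w b := by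
    rw [SimpleGraph.deleteEdges_adj]
    refine ⟨C.adj_wb, fun hmem => ?_⟩
    rcases Sym2.eq_iff.mp (Set.mem_singleton_iff.mp hmem) with ⟨-, hba⟩ | ⟨hwa, -⟩
    · exact C.hab hba.symm
    · exact C.haw hwa.symm
  constructor
  · intro h
    have hres := C.back {s(w, a)} {s((⟨b, C.bOK⟩ : {v : V // v ≠ ℓ ∧ v ≠ w}), ⟨a, C.aOK⟩)}
      (fun p q _ _ hmem =>
        (sym2_ne_of_ne (Ne.symm p.2.2) (Ne.symm q.2.2)).symm (Set.mem_singleton_iff.mp hmem))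
      (fun hnd => (hnd (Set.mem_singleton_iff.mpr (Sym2.eq_swap))).elim)
      h
    exact hres.trans hwb_del.symm.reachable
  · intro h
    obtain ⟨p⟩ := h.trans hwb_del.reachable
    exact C.fwd {s(w, a)} {s((⟨b, C.bOK⟩ : {v : V // v ≠ ℓ ∧ v ≠ w}), ⟨a, C.aOK⟩)}
      (fun p q hadj _ hmem => by
        have hvals : s((p : V), (q : V)) = s(b, a) :=
          sym2_val_congr (u := ⟨b, C.bOK⟩) (v := ⟨a, C.aOK⟩) (Set.mem_singleton_iff.mp hmem)
        rcases Sym2.eq_iff.mp hvals with ⟨h1, h2⟩ | ⟨h1, h2⟩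
        · rw [h1, h2] at hadj
          exact C.nadj hadj.symm
        · rw [h1, h2] at hadj
          exact C.nadj hadj)
      (fun h1 _ => (h1 (Set.mem_singleton_iff.mpr (Sym2.eq_swap))).elim)
      p.length L b hL C.bOK p le_rfl

end DelCtx

end DelSurgery4

section DelSurgery5

open SimpleGraph

lemma del_surgery {α : Type} {E : Finset α} (D : Decomp α E) (x : α) (hx : x ∈ E)
    (h3 : 3 ≤ E.card) :
    ∃ D' : Decomp α (E.erase x), ∀ U' : Finset α, D'.Displays U' →
      ∃ U : Finset α, D.Displays U ∧ U' = U.erase x := by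
  classical
  have memnf : ∀ u z : D.V, z ∈ D.G.neighborFinset u ↔ D.G.Adj u z := fun u z => by simp
  set ℓ := D.leaf x with hℓ
  have hdegl : (D.G.neighborFinset ℓ).card = 1 := D.leaf_degree x hx
  obtain ⟨w, hw⟩ := Finset.card_eq_one.mp hdegl
  have hadj_lw : D.G.Adj ℓ w := by
    rw [← memnf, hw]
    exact Finset.mem_singleton_self w
  have nl : D.G.neighborSet ℓ = {w} := by
    ext z
    rw [Set.mem_singleton_iff, SimpleGraph.mem_neighborSet, ← memnf, hw, Finset.mem_singleton]
  have hbridge : ∀ u v : D.V, D.G.Adj u v →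
      ¬ (D.G.deleteEdges {s(u, v)}).Reachable u v := by
    intro u v huv
    have := (isAcyclic_iff_forall_adj_isBridge.mp D.isTree.2) huv
    rw [isBridge_iff] at this
    exact this
  -- w has degree 3
  have hdegw : D.G.degree w = 3 := by
    rcases D.subcubic w with h1 | h3'
    · exfalso
      obtain ⟨z, hz⟩ := Finset.card_eq_one.mp (h1 : (D.G.neighborFinset w).card = 1)
      have hzl : z = ℓ := by
        have hm : ℓ ∈ D.G.neighborFinset w := (memnf w ℓ).mpr hadj_lw.symm
        rw [hz, Finset.mem_singleton] at hm
        exact hm.symm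
      rw [hzl] at hz
      have hrange : ∀ (s v : D.V) (p : D.G.Walk s v), (s = ℓ ∨ s = w) → v = ℓ ∨ v = w := by
        intro s v p
        induction p with
        | nil => exact id
        | cons hadj q ih =>
          rename_i s' y t'
          intro hs
          rcases hs with hs | hs
          · refine ih (Or.inr ?_)
            rw [hs] at hadj
            have : y ∈ D.G.neighborSet ℓ := hadj
            rwa [nl, Set.mem_singleton_iff] at this
          · refine ih (Or.inl ?_)
            rw [hs] at hadj
            have : y ∈ D.G.neighborFinset w := (memnf w y).mpr hadj
            rwa [hz, Finset.mem_singleton] at this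
      have h2 : 1 < (E.erase x).card := by
        rw [Finset.card_erase_of_mem hx]
        omega
      obtain ⟨c1, hc1, c2, hc2, hcc⟩ := Finset.one_lt_card.mp h2
      have hinj := D.leaf_injOn
      have hlne : ∀ c ∈ E.erase x, D.leaf c ≠ ℓ := by
        intro c hc h
        obtain ⟨hcx, hcE⟩ := Finset.mem_erase.mp hc
        exact hcx (hinj hcE hx h)
      obtain ⟨c, hc, hcw⟩ : ∃ c ∈ E.erase x, D.leaf c ≠ w := by
        by_cases h : D.leaf c1 = w
        · refine ⟨c2, hc2, fun h2' => hcc ?_⟩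
          exact hinj (Finset.mem_of_mem_erase hc1) (Finset.mem_of_mem_erase hc2)
            (h.trans h2'.symm)
        · exact ⟨c1, hc1, h⟩
      obtain ⟨p⟩ := D.isTree.1.preconnected ℓ (D.leaf c)
      rcases hrange ℓ (D.leaf c) p (Or.inl rfl) with h | h
      · exact hlne c hc h
      · exact hcw h
    · exact h3'
  -- the two other neighbours a, b
  have hlmem : ℓ ∈ D.G.neighborFinset w := (memnf w ℓ).mpr hadj_lw.symm
  have hfw : (D.G.neighborFinset w).card = 3 := hdegw
  have hcard2 : ((D.G.neighborFinset w).erase ℓ).card = 2 := by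
    rw [Finset.card_erase_of_mem hlmem, hfw]
  obtain ⟨a, b, hab, heq⟩ := Finset.card_eq_two.mp hcard2
  have hamem : a ∈ (D.G.neighborFinset w).erase ℓ := by rw [heq]; simp
  have hbmem : b ∈ (D.G.neighborFinset w).erase ℓ := by rw [heq]; simp
  have hanl : a ≠ ℓ := (Finset.mem_erase.mp hamem).1
  have hbnl : b ≠ ℓ := (Finset.mem_erase.mp hbmem).1
  have hadj_wa : D.G.Adj w a := (memnf w a).mp (Finset.mem_of_mem_erase hamem)
  have hadj_wb : D.G.Adj w b := (memnf w b).mp (Finset.mem_of_mem_erase hbmem)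
  have nw : D.G.neighborSet w = {ℓ, a, b} := by
    ext z
    simp only [Set.mem_insert_iff, Set.mem_singleton_iff]
    rw [SimpleGraph.mem_neighborSet, ← memnf]
    constructor
    · intro hz
      by_cases hzl : z = ℓ
      · exact Or.inl hzl
      · have hmm : z ∈ (D.G.neighborFinset w).erase ℓ := Finset.mem_erase.mpr ⟨hzl, hz⟩
        rw [heq, Finset.mem_insert, Finset.mem_singleton] at hmm
        exact Or.inr hmm
    · rintro (rfl | rfl | rfl)
      · exact hlmem
      · exact Finset.mem_of_mem_erase hamem
      · exact Finset.mem_of_mem_erase hbmem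
  have nadj : ¬ D.G.Adj a b := by
    intro hadj
    have hwa_del : (D.G.deleteEdges {s(w, b)}).Adj w a := by
      rw [SimpleGraph.deleteEdges_adj]
      refine ⟨hadj_wa, fun hmem => ?_⟩
      rcases Sym2.eq_iff.mp (Set.mem_singleton_iff.mp hmem) with ⟨-, h'⟩ | ⟨h', -⟩
      · exact hab h'
      · exact D.G.loopless.irrefl b (h' ▸ hadj_wb)
    have hab_del : (D.G.deleteEdges {s(w, b)}).Adj a b := by
      rw [SimpleGraph.deleteEdges_adj]
      refine ⟨hadj, fun hmem => ?_⟩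
      have hwa : w ≠ a := fun h => D.G.loopless.irrefl a (h ▸ hadj_wa)
      have hwb : w ≠ b := fun h => D.G.loopless.irrefl b (h ▸ hadj_wb)
      exact sym2_ne_of_ne hwa hwb (Set.mem_singleton_iff.mp hmem).symm
    exact hbridge w b hadj_wb (hwa_del.reachable.trans hab_del.reachable)
  have C : DelCtx D.G ℓ w a b :=
    ⟨D.isTree.2, nl, nw, hab, hanl, hbnl, nadj⟩
  -- leaves of the new decomposition
  have hleafOK : ∀ c ∈ E.erase x, D.leaf c ≠ ℓ ∧ D.leaf c ≠ w := by
    intro c hc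
    obtain ⟨hcx, hcE⟩ := Finset.mem_erase.mp hc
    constructor
    · intro h
      exact hcx (D.leaf_injOn hcE hx h)
    · intro h
      have hd := D.leaf_degree c hcE
      rw [h, hdegw] at hd
      omega
  let leaf' : α → {v : D.V // v ≠ ℓ ∧ v ≠ w} := fun c =>
    if h : D.leaf c ≠ ℓ ∧ D.leaf c ≠ w then ⟨D.leaf c, h⟩ else ⟨a, C.aOK⟩
  have hleaf' : ∀ c ∈ E.erase x, (leaf' c : D.V) = D.leaf c := by
    intro c hc
    simp only [leaf', dif_pos (hleafOK c hc)]
  have hleafeq : ∀ c ∈ E.erase x, ∀ hcond : D.leaf c ≠ ℓ ∧ D.leaf c ≠ w,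
      leaf' c = ⟨D.leaf c, hcond⟩ := by
    intro c hc hcond
    exact Subtype.ext (hleaf' c hc)
  have instDec : DecidableRel (delGraph D.G ℓ w a b C.hab).Adj := Classical.decRel _
  refine ⟨{
    V := {v : D.V // v ≠ ℓ ∧ v ≠ w}
    G := delGraph D.G ℓ w a b C.hab
    decAdj := instDec
    isTree := C.delGraph_isTree D.isTree.1
    subcubic := fun v => by
      rw [C.degree_delGraph v]
      exact D.subcubic ↑v
    leaf := leaf'
    leaf_degree := fun c hc => by
      rw [C.degree_delGraph (leaf' c), hleaf' c hc]
      exact D.leaf_degree c (Finset.mem_of_mem_erase hc)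
    leaf_injOn := by
      intro c hc c' hc' h
      have h1 := hleaf' c hc
      have h2 := hleaf' c' hc'
      exact D.leaf_injOn (Finset.mem_of_mem_erase hc) (Finset.mem_of_mem_erase hc')
        (by rw [← h1, ← h2, h])
    leaf_surj := by
      intro v hv
      rw [C.degree_delGraph v] at hv
      obtain ⟨c, hcE, hcv⟩ := D.leaf_surj ↑v hv
      have hcx : c ≠ x := by
        intro h
        exact v.2.1 (by rw [← hcv, h])
      refine ⟨c, Finset.mem_erase.mpr ⟨hcx, hcE⟩, ?_⟩
      apply Subtype.ext
      rw [hleaf' c (Finset.mem_erase.mpr ⟨hcx, hcE⟩), hcv]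
    }, ?_⟩
  intro U' hDisp
  obtain ⟨hU'sub, u, v, huv, hiff⟩ := hDisp
  have huv' : D.G.Adj ↑u ↑v ∨ ((u : D.V) = a ∧ (v : D.V) = b) ∨
      ((u : D.V) = b ∧ (v : D.V) = a) := huv
  rcases huv' with hG | ⟨h1, h2⟩ | ⟨h1, h2⟩
  · -- old edge
    refine ⟨E.filter (fun c => (D.G.deleteEdges {s((u : D.V), (v : D.V))}).Reachable
        (D.leaf c) ↑u), ⟨Finset.filter_subset _ _, ↑u, ↑v, hG, fun c hc => by
          simp [Finset.mem_filter, hc]⟩, ?_⟩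
    ext c
    rw [Finset.mem_erase, Finset.mem_filter]
    constructor
    · intro hcU'
      have hcE' := hU'sub hcU'
      obtain ⟨hcx, hcE⟩ := Finset.mem_erase.mp hcE'
      have hreach : ((delGraph D.G ℓ w a b C.hab).deleteEdges {s(u, v)}).Reachable
          (leaf' c) u := (hiff c hcE').mp hcU'
      rw [hleafeq c hcE' (hleafOK c hcE')] at hreach
      exact ⟨hcx, hcE, (C.old_edge_iff u v hG (D.leaf c) (hleafOK c hcE')).mp hreach⟩
    · rintro ⟨hcx, hcE, hreach⟩
      have hcE' : c ∈ E.erase x := Finset.mem_erase.mpr ⟨hcx, hcE⟩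
      refine (hiff c hcE').mpr ?_
      show ((delGraph D.G ℓ w a b C.hab).deleteEdges {s(u, v)}).Reachable (leaf' c) u
      rw [hleafeq c hcE' (hleafOK c hcE')]
      exact (C.old_edge_iff u v hG (D.leaf c) (hleafOK c hcE')).mpr hreach
  · -- new edge, orientation (a, b)
    have hu : u = (⟨a, C.aOK⟩ : {v : D.V // v ≠ ℓ ∧ v ≠ w}) := Subtype.ext h1
    have hv : v = (⟨b, C.bOK⟩ : {v : D.V // v ≠ ℓ ∧ v ≠ w}) := Subtype.ext h2
    refine ⟨E.filter (fun c => (D.G.deleteEdges {s(w, b)}).Reachable (D.leaf c) w),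
      ⟨Finset.filter_subset _ _, w, b, hadj_wb, fun c hc => by
        simp [Finset.mem_filter, hc]⟩, ?_⟩
    ext c
    rw [Finset.mem_erase, Finset.mem_filter]
    constructor
    · intro hcU'
      have hcE' := hU'sub hcU'
      obtain ⟨hcx, hcE⟩ := Finset.mem_erase.mp hcE'
      have hreach : ((delGraph D.G ℓ w a b C.hab).deleteEdges {s(u, v)}).Reachable
          (leaf' c) u := (hiff c hcE').mp hcU'
      rw [hleafeq c hcE' (hleafOK c hcE'), hu, hv] at hreach
      exact ⟨hcx, hcE, (C.new_edge_iff (D.leaf c) (hleafOK c hcE')).mp hreach⟩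
    · rintro ⟨hcx, hcE, hreach⟩
      have hcE' : c ∈ E.erase x := Finset.mem_erase.mpr ⟨hcx, hcE⟩
      refine (hiff c hcE').mpr ?_
      show ((delGraph D.G ℓ w a b C.hab).deleteEdges {s(u, v)}).Reachable (leaf' c) u
      rw [hleafeq c hcE' (hleafOK c hcE'), hu, hv]
      exact (C.new_edge_iff (D.leaf c) (hleafOK c hcE')).mpr hreach
  · -- new edge, orientation (b, a)
    have hu : u = (⟨b, C.bOK⟩ : {v : D.V // v ≠ ℓ ∧ v ≠ w}) := Subtype.ext h1
    have hv : v = (⟨a, C.aOK⟩ : {v : D.V // v ≠ ℓ ∧ v ≠ w}) := Subtype.ext h2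
    refine ⟨E.filter (fun c => (D.G.deleteEdges {s(w, a)}).Reachable (D.leaf c) w),
      ⟨Finset.filter_subset _ _, w, a, hadj_wa, fun c hc => by
        simp [Finset.mem_filter, hc]⟩, ?_⟩
    ext c
    rw [Finset.mem_erase, Finset.mem_filter]
    constructor
    · intro hcU'
      have hcE' := hU'sub hcU'
      obtain ⟨hcx, hcE⟩ := Finset.mem_erase.mp hcE'
      have hreach : ((delGraph D.G ℓ w a b C.hab).deleteEdges {s(u, v)}).Reachable
          (leaf' c) u := (hiff c hcE').mp hcU'
      rw [hleafeq c hcE' (hleafOK c hcE'), hu, hv] at hreach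
      exact ⟨hcx, hcE, (C.new_edge_iff' (D.leaf c) (hleafOK c hcE')).mp hreach⟩
    · rintro ⟨hcx, hcE, hreach⟩
      have hcE' : c ∈ E.erase x := Finset.mem_erase.mpr ⟨hcx, hcE⟩
      refine (hiff c hcE').mpr ?_
      show ((delGraph D.G ℓ w a b C.hab).deleteEdges {s(u, v)}).Reachable (leaf' c) u
      rw [hleafeq c hcE' (hleafOK c hcE'), hu, hv]
      exact (C.new_edge_iff' (D.leaf c) (hleafOK c hcE')).mpr hreach

end DelSurgery5

section AddSurgery

open SimpleGraph

variable {V W' : Type}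

lemma sym2_congr_map {f : V → W'} {x y z t : V} (h : s(x, y) = s(z, t)) :
    s(f x, f y) = s(f z, f t) := by
  rcases Sym2.eq_iff.mp h with ⟨rfl, rfl⟩ | ⟨rfl, rfl⟩
  · rfl
  · exact Sym2.eq_swap

variable [Fintype V] [DecidableEq V]

/-- Adjacency for the tree obtained by subdividing the edge `pq` with a new vertex
`inr false` and attaching a new leaf `inr true` to it. -/
def addAdj (G : SimpleGraph V) (p q : V) : V ⊕ Bool → V ⊕ Bool → Prop
  | .inl a, .inl b => G.Adj a b ∧ ¬(a = p ∧ b = q) ∧ ¬(a = q ∧ b = p)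
  | .inl a, .inr false => a = p ∨ a = q
  | .inr false, .inl b => b = p ∨ b = q
  | .inr false, .inr true => True
  | .inr true, .inr false => True
  | _, _ => False

def addGraph (G : SimpleGraph V) (p q : V) : SimpleGraph (V ⊕ Bool) where
  Adj u v := addAdj G p q u v
  symm := by
    constructor
    intro u v h
    cases u with
    | inl a =>
      cases v with
      | inl b => exact ⟨h.1.symm, fun hh => h.2.2 ⟨hh.2, hh.1⟩, fun hh => h.2.1 ⟨hh.2, hh.1⟩⟩
      | inr b =>
        cases b with
        | false => exact h
        | true => exact h.elim
    | inr c =>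
      cases c with
      | false =>
        cases v with
        | inl b => exact h
        | inr b =>
          cases b with
          | false => exact h.elim
          | true => exact h
      | true =>
        cases v with
        | inl b => exact h.elim
        | inr b =>
          cases b with
          | false => exact h
          | true => exact h.elim
  loopless := by
    constructor
    intro u
    cases u with
    | inl a => exact fun h => G.loopless.irrefl a h.1
    | inr c =>
      cases c with
      | false => exact fun h => h
      | true => exact fun h => h

variable {G : SimpleGraph V} {p q : V}

lemma addGraph_degree_inl_p [DecidableRel G.Adj] [DecidableRel (addGraph G p q).Adj]
    (hpq : G.Adj p q) :
    (addGraph G p q).degree (Sum.inl p) = G.degree p := by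
  classical
  rw [SimpleGraph.degree, SimpleGraph.degree]
  have himg : (addGraph G p q).neighborFinset (Sum.inl p)
      = insert (Sum.inr false) (((G.neighborFinset p).erase q).image Sum.inl) := by
    ext u
    simp only [SimpleGraph.mem_neighborFinset, Finset.mem_insert, Finset.mem_image,
      Finset.mem_erase]
    cases u with
    | inl b =>
      constructor
      · rintro ⟨h1, h2, -⟩
        exact Or.inr ⟨b, ⟨fun hh => h2 ⟨rfl, hh⟩, h1⟩, rfl⟩
      · rintro (h | ⟨b', ⟨hb1, hb2⟩, hb3⟩)
        · exact absurd h (by simp)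
        · obtain rfl : b' = b := Sum.inl_injective hb3
          exact ⟨hb2, fun hh => hb1 hh.2, fun hh => (G.ne_of_adj hpq) hh.1⟩
    | inr c =>
      cases c with
      | false =>
        constructor
        · intro _; exact Or.inl rfl
        · intro _; exact Or.inl rfl
      | true =>
        constructor
        · exact fun h => h.elim
        · rintro (h | ⟨b', -, hb3⟩)
          · exact absurd h (by simp)
          · exact absurd hb3 (by simp)
  rw [himg, Finset.card_insert_of_notMem (by
      simp only [Finset.mem_image]
      rintro ⟨b', -, hb3⟩
      exact absurd hb3 (by simp)),
    Finset.card_image_of_injective _ Sum.inl_injective,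
    Finset.card_erase_of_mem (by rw [SimpleGraph.mem_neighborFinset]; exact hpq)]
  have h1c : 1 ≤ (G.neighborFinset p).card := Finset.one_le_card.mpr
    ⟨q, by rw [SimpleGraph.mem_neighborFinset]; exact hpq⟩
  omega

lemma addGraph_degree_inl_q [DecidableRel G.Adj] [DecidableRel (addGraph G p q).Adj]
    (hpq : G.Adj p q) :
    (addGraph G p q).degree (Sum.inl q) = G.degree q := by
  classical
  rw [SimpleGraph.degree, SimpleGraph.degree]
  have himg : (addGraph G p q).neighborFinset (Sum.inl q)
      = insert (Sum.inr false) (((G.neighborFinset q).erase p).image Sum.inl) := by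
    ext u
    simp only [SimpleGraph.mem_neighborFinset, Finset.mem_insert, Finset.mem_image,
      Finset.mem_erase]
    cases u with
    | inl b =>
      constructor
      · rintro ⟨h1, -, h3⟩
        exact Or.inr ⟨b, ⟨fun hh => h3 ⟨rfl, hh⟩, h1⟩, rfl⟩
      · rintro (h | ⟨b', ⟨hb1, hb2⟩, hb3⟩)
        · exact absurd h (by simp)
        · obtain rfl : b' = b := Sum.inl_injective hb3
          exact ⟨hb2, fun hh => (G.ne_of_adj hpq) hh.1.symm, fun hh => hb1 hh.2⟩
    | inr c =>
      cases c with
      | false =>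
        constructor
        · intro _; exact Or.inl rfl
        · intro _; exact Or.inr rfl
      | true =>
        constructor
        · exact fun h => h.elim
        · rintro (h | ⟨b', -, hb3⟩)
          · exact absurd h (by simp)
          · exact absurd hb3 (by simp)
  rw [himg, Finset.card_insert_of_notMem (by
      simp only [Finset.mem_image]
      rintro ⟨b', -, hb3⟩
      exact absurd hb3 (by simp)),
    Finset.card_image_of_injective _ Sum.inl_injective,
    Finset.card_erase_of_mem (by rw [SimpleGraph.mem_neighborFinset]; exact hpq.symm)]
  have h1c : 1 ≤ (G.neighborFinset q).card := Finset.one_le_card.mpr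
    ⟨p, by rw [SimpleGraph.mem_neighborFinset]; exact hpq.symm⟩
  omega

lemma addGraph_degree_inl [DecidableRel G.Adj] [DecidableRel (addGraph G p q).Adj]
    (hpq : G.Adj p q) (a : V) :
    (addGraph G p q).degree (Sum.inl a) = G.degree a := by
  classical
  by_cases hap : a = p
  · rw [hap]; exact addGraph_degree_inl_p hpq
  · by_cases haq : a = q
    · rw [haq]; exact addGraph_degree_inl_q hpq
    · rw [SimpleGraph.degree, SimpleGraph.degree]
      have himg : (addGraph G p q).neighborFinset (Sum.inl a)
          = (G.neighborFinset a).image Sum.inl := by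
        ext u
        simp only [SimpleGraph.mem_neighborFinset, Finset.mem_image]
        cases u with
        | inl b =>
          constructor
          · rintro ⟨h1, -, -⟩
            exact ⟨b, h1, rfl⟩
          · rintro ⟨b', hb', hb3⟩
            obtain rfl : b' = b := Sum.inl_injective hb3
            exact ⟨hb', fun hh => hap hh.1, fun hh => haq hh.1⟩
        | inr c =>
          cases c with
          | false =>
            constructor
            · rintro (h | h)
              · exact absurd h hap
              · exact absurd h haq
            · rintro ⟨b', -, hb3⟩
              exact absurd hb3 (by simp)
          | true =>
            constructor
            · exact fun h => h.elim
            · rintro ⟨b', -, hb3⟩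
              exact absurd hb3 (by simp)
      rw [himg, Finset.card_image_of_injective _ Sum.inl_injective]

lemma addGraph_degree_mid [DecidableRel (addGraph G p q).Adj]
    (hpq : G.Adj p q) :
    (addGraph G p q).degree (Sum.inr false) = 3 := by
  classical
  have hne : p ≠ q := G.ne_of_adj hpq
  have himg : (addGraph G p q).neighborFinset (Sum.inr false)
      = {Sum.inl p, Sum.inl q, Sum.inr true} := by
    ext u
    simp only [SimpleGraph.mem_neighborFinset, Finset.mem_insert, Finset.mem_singleton]
    cases u with
    | inl b =>
      constructor
      · rintro (rfl | rfl)
        · exact Or.inl rfl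
        · exact Or.inr (Or.inl rfl)
      · rintro (h | h | h)
        · exact Or.inl (Sum.inl_injective h)
        · exact Or.inr (Sum.inl_injective h)
        · exact absurd h (by simp)
    | inr c =>
      cases c with
      | false =>
        constructor
        · exact fun h => h.elim
        · rintro (h | h | h) <;> simp_all
      | true =>
        constructor
        · intro _
          exact Or.inr (Or.inr rfl)
        · intro _
          trivial
  rw [SimpleGraph.degree, himg]
  rw [Finset.card_insert_of_notMem (by simp [hne]), Finset.card_insert_of_notMem (by simp)]
  simp

lemma addGraph_degree_top [DecidableRel (addGraph G p q).Adj] :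
    (addGraph G p q).degree (Sum.inr true) = 1 := by
  classical
  have himg : (addGraph G p q).neighborFinset (Sum.inr true) = {Sum.inr false} := by
    ext u
    simp only [SimpleGraph.mem_neighborFinset, Finset.mem_singleton]
    cases u with
    | inl b =>
      constructor
      · exact fun h => h.elim
      · intro h; exact absurd h (by simp)
    | inr c =>
      cases c with
      | false =>
        constructor
        · intro _; rfl
        · intro _; trivial
      | true =>
        constructor
        · exact fun h => h.elim
        · intro h; simp at h
  rw [SimpleGraph.degree, himg, Finset.card_singleton]

lemma addGraph_connected (hG : G.Connected) (hpq : G.Adj p q) :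
    (addGraph G p q).Connected := by
  have hstep : ∀ u v : V, G.Adj u v → (addGraph G p q).Reachable (Sum.inl u) (Sum.inl v) := by
    intro u v huv
    by_cases h1 : u = p ∧ v = q
    · have e1 : (addGraph G p q).Adj (Sum.inl u) (Sum.inr false) := Or.inl h1.1
      have e2 : (addGraph G p q).Adj (Sum.inr false) (Sum.inl v) := Or.inr h1.2
      exact e1.reachable.trans e2.reachable
    · by_cases h2 : u = q ∧ v = p
      · have e1 : (addGraph G p q).Adj (Sum.inl u) (Sum.inr false) := Or.inr h2.1
        have e2 : (addGraph G p q).Adj (Sum.inr false) (Sum.inl v) := Or.inl h2.2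
        exact e1.reachable.trans e2.reachable
      · exact (Adj.reachable (⟨huv, h1, h2⟩ :
          (addGraph G p q).Adj (Sum.inl u) (Sum.inl v)))
  have reach_to : ∀ u : V ⊕ Bool, (addGraph G p q).Reachable u (Sum.inl p) := by
    intro u
    cases u with
    | inl a => exact reachable_map Sum.inl hstep (hG.preconnected a p)
    | inr c =>
      cases c with
      | false => exact (Adj.reachable (Or.inl rfl :
          (addGraph G p q).Adj (Sum.inr false) (Sum.inl p)))
      | true =>
        have e1 : (addGraph G p q).Adj (Sum.inr true) (Sum.inr false) := trivial
        have e2 : (addGraph G p q).Adj (Sum.inr false) (Sum.inl p) := Or.inl rfl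
        exact e1.reachable.trans e2.reachable
  have hne : Nonempty (V ⊕ Bool) := ⟨Sum.inl p⟩
  exact SimpleGraph.Connected.mk (fun s t => (reach_to s).trans (reach_to t).symm)

end AddSurgery

section AddSurgery2

open SimpleGraph

variable {V : Type} [Fintype V] [DecidableEq V] {G : SimpleGraph V} {p q : V}

lemma addGraph_bridge_ll (hT : G.IsAcyclic) (hpq : G.Adj p q) {a b : V}
    (h : (addGraph G p q).Adj (.inl a) (.inl b)) :
    ¬((addGraph G p q).deleteEdges
        {s((Sum.inl a : V ⊕ Bool), Sum.inl b)}).Reachable (.inl a) (.inl b) := by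
  intro hreach
  obtain ⟨hab, hc1, hc2⟩ := h
  have hbr := (isAcyclic_iff_forall_adj_isBridge.mp hT) hab
  rw [isBridge_iff] at hbr
  refine hbr ?_
  refine reachable_map (Sum.elim id (fun _ => p)) ?_ hreach
  intro x y hxy
  rw [SimpleGraph.deleteEdges_adj] at hxy
  obtain ⟨hadj, hne⟩ := hxy
  cases x with
  | inl c =>
    cases y with
    | inl d =>
      obtain ⟨hcd, -, -⟩ := hadj
      refine (SimpleGraph.deleteEdges_adj.mpr ⟨hcd, fun hmem => hne ?_⟩).reachable
      exact Set.mem_singleton_iff.mpr (sym2_congr_map (Set.mem_singleton_iff.mp hmem))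
    | inr e =>
      cases e with
      | false =>
        rcases (hadj : c = p ∨ c = q) with rfl | rfl
        · exact Reachable.refl _
        · refine (SimpleGraph.deleteEdges_adj.mpr ⟨hpq.symm, fun hmem => ?_⟩).reachable
          rcases Sym2.eq_iff.mp (Set.mem_singleton_iff.mp hmem) with ⟨h1, h2⟩ | ⟨h1, h2⟩
          · exact hc2 ⟨h1.symm, h2.symm⟩
          · exact hc1 ⟨h2.symm, h1.symm⟩
      | true => exact hadj.elim
  | inr e =>
    cases e with
    | false =>
      cases y with
      | inl d =>
        rcases (hadj : d = p ∨ d = q) with rfl | rfl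
        · exact Reachable.refl _
        · refine (SimpleGraph.deleteEdges_adj.mpr ⟨hpq, fun hmem => ?_⟩).reachable
          rcases Sym2.eq_iff.mp (Set.mem_singleton_iff.mp hmem) with ⟨h1, h2⟩ | ⟨h1, h2⟩
          · exact hc1 ⟨h1.symm, h2.symm⟩
          · exact hc2 ⟨h2.symm, h1.symm⟩
      | inr e' =>
        cases e' with
        | false => exact hadj.elim
        | true => exact Reachable.refl _
    | true =>
      cases y with
      | inl d => exact hadj.elim
      | inr e' =>
        cases e' with
        | false => exact Reachable.refl _
        | true => exact hadj.elim

lemma addGraph_bridge_pm (hT : G.IsAcyclic) (hpq : G.Adj p q) :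
    ¬((addGraph G p q).deleteEdges
        {s((Sum.inl p : V ⊕ Bool), Sum.inr false)}).Reachable (.inl p) (.inr false) := by
  intro hreach
  have hbr := (isAcyclic_iff_forall_adj_isBridge.mp hT) hpq
  rw [isBridge_iff] at hbr
  refine hbr ?_
  refine reachable_map (Sum.elim id (fun _ => q)) ?_ hreach
  intro x y hxy
  rw [SimpleGraph.deleteEdges_adj] at hxy
  obtain ⟨hadj, hne⟩ := hxy
  cases x with
  | inl c =>
    cases y with
    | inl d =>
      obtain ⟨hcd, hc1, hc2⟩ := hadj
      refine (SimpleGraph.deleteEdges_adj.mpr ⟨hcd, fun hmem => ?_⟩).reachable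
      rcases Sym2.eq_iff.mp (Set.mem_singleton_iff.mp hmem) with ⟨h1, h2⟩ | ⟨h1, h2⟩
      · exact hc1 ⟨h1, h2⟩
      · exact hc2 ⟨h1, h2⟩
    | inr e =>
      cases e with
      | false =>
        rcases (hadj : c = p ∨ c = q) with rfl | rfl
        · exact (hne rfl).elim
        · exact Reachable.refl _
      | true => exact hadj.elim
  | inr e =>
    cases e with
    | false =>
      cases y with
      | inl d =>
        rcases (hadj : d = p ∨ d = q) with rfl | rfl
        · refine (hne ?_).elim
          exact Set.mem_singleton_iff.mpr Sym2.eq_swap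
        · exact Reachable.refl _
      | inr e' =>
        cases e' with
        | false => exact hadj.elim
        | true => exact Reachable.refl _
    | true =>
      cases y with
      | inl d => exact hadj.elim
      | inr e' =>
        cases e' with
        | false => exact Reachable.refl _
        | true => exact hadj.elim

lemma addGraph_bridge_qm (hT : G.IsAcyclic) (hpq : G.Adj p q) :
    ¬((addGraph G p q).deleteEdges
        {s((Sum.inl q : V ⊕ Bool), Sum.inr false)}).Reachable (.inl q) (.inr false) := by
  intro hreach
  have hbr := (isAcyclic_iff_forall_adj_isBridge.mp hT) hpq
  rw [isBridge_iff] at hbr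
  refine hbr (Reachable.symm
    (reachable_map (Sum.elim id (fun _ => p)) (fun x y hxy => ?_) hreach))
  rw [SimpleGraph.deleteEdges_adj] at hxy
  obtain ⟨hadj, hne⟩ := hxy
  cases x with
  | inl c =>
    cases y with
    | inl d =>
      obtain ⟨hcd, hc1, hc2⟩ := hadj
      refine (SimpleGraph.deleteEdges_adj.mpr ⟨hcd, fun hmem => ?_⟩).reachable
      rcases Sym2.eq_iff.mp (Set.mem_singleton_iff.mp hmem) with ⟨h1, h2⟩ | ⟨h1, h2⟩
      · exact hc1 ⟨h1, h2⟩
      · exact hc2 ⟨h1, h2⟩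
    | inr e =>
      cases e with
      | false =>
        rcases (hadj : c = p ∨ c = q) with rfl | rfl
        · exact Reachable.refl _
        · exact (hne rfl).elim
      | true => exact hadj.elim
  | inr e =>
    cases e with
    | false =>
      cases y with
      | inl d =>
        rcases (hadj : d = p ∨ d = q) with rfl | rfl
        · exact Reachable.refl _
        · refine (hne ?_).elim
          exact Set.mem_singleton_iff.mpr Sym2.eq_swap
      | inr e' =>
        cases e' with
        | false => exact hadj.elim
        | true => exact Reachable.refl _
    | true =>
      cases y with
      | inl d => exact hadj.elim
      | inr e' =>
        cases e' with
        | false => exact Reachable.refl _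
        | true => exact hadj.elim

lemma addGraph_bridge_mt :
    ¬((addGraph G p q).deleteEdges
        {s((Sum.inr false : V ⊕ Bool), Sum.inr true)}).Reachable (.inr false) (.inr true) := by
  intro hreach
  obtain ⟨r⟩ := hreach.symm
  cases r with
  | cons h tail =>
    rename_i y
    rw [SimpleGraph.deleteEdges_adj] at h
    obtain ⟨hadj, hne⟩ := h
    cases y with
    | inl d => exact hadj.elim
    | inr e =>
      cases e with
      | false => exact hne (Set.mem_singleton_iff.mpr Sym2.eq_swap)
      | true => exact hadj.elim

lemma addGraph_isTree (hT : G.IsTree) (hpq : G.Adj p q) :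
    (addGraph G p q).IsTree := by
  refine ⟨addGraph_connected hT.1 hpq, ?_⟩
  rw [isAcyclic_iff_forall_adj_isBridge]
  intro u v hadj
  rw [isBridge_iff]
  refine fun hreach => ?_
  cases u with
  | inl a =>
    cases v with
    | inl b => exact addGraph_bridge_ll hT.2 hpq hadj hreach
    | inr e =>
      cases e with
      | false =>
        rcases (hadj : a = p ∨ a = q) with rfl | rfl
        · exact addGraph_bridge_pm hT.2 hpq hreach
        · exact addGraph_bridge_qm hT.2 hpq hreach
      | true => exact hadj.elim
  | inr e =>
    cases e with
    | false =>
      cases v with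
      | inl b =>
        have hswap : s((Sum.inr false : V ⊕ Bool), Sum.inl b) = s(Sum.inl b, Sum.inr false) :=
          Sym2.eq_swap
        rw [hswap] at hreach
        rcases (hadj : b = p ∨ b = q) with rfl | rfl
        · exact addGraph_bridge_pm hT.2 hpq hreach.symm
        · exact addGraph_bridge_qm hT.2 hpq hreach.symm
      | inr e' =>
        cases e' with
        | false => exact ((addGraph G p q).loopless.irrefl _ hadj).elim
        | true => exact addGraph_bridge_mt hreach
    | true =>
      cases v with
      | inl b => exact hadj.elim
      | inr e' =>
        cases e' with
        | false =>
          have hswap : s((Sum.inr true : V ⊕ Bool), Sum.inr false)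
              = s(Sum.inr false, Sum.inr true) := Sym2.eq_swap
          rw [hswap] at hreach
          exact addGraph_bridge_mt hreach.symm
        | true => exact hadj.elim

end AddSurgery2

section AddSurgery3

open SimpleGraph

lemma add_surgery {α : Type} {F : Finset α} (D : Decomp α F) (x : α) (hx : x ∉ F) :
    Nonempty (Decomp α (insert x F)) := by
  classical
  obtain ⟨p⟩ := D.isTree.1.nonempty
  have hdegp : 1 ≤ D.G.degree p := by rcases D.subcubic p with h | h <;> omega
  obtain ⟨q, hq⟩ := Finset.card_pos.mp hdegp
  have hpq : D.G.Adj p q := by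
    rw [SimpleGraph.mem_neighborFinset] at hq
    exact hq
  have instDec : DecidableRel (addGraph D.G p q).Adj := Classical.decRel _
  refine ⟨{
    V := D.V ⊕ Bool
    G := addGraph D.G p q
    decAdj := instDec
    isTree := addGraph_isTree D.isTree hpq
    subcubic := fun v => by
      cases v with
      | inl a =>
        rw [addGraph_degree_inl hpq a]
        exact D.subcubic a
      | inr e =>
        cases e with
        | false => exact Or.inr (addGraph_degree_mid hpq)
        | true => exact Or.inl addGraph_degree_top
    leaf := fun c => if c = x then Sum.inr true else Sum.inl (D.leaf c)
    leaf_degree := fun c hc => by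
      show (addGraph D.G p q).degree (if c = x then Sum.inr true else Sum.inl (D.leaf c)) = 1
      by_cases hcx : c = x
      · rw [if_pos hcx]
        exact addGraph_degree_top
      · rw [if_neg hcx, addGraph_degree_inl hpq]
        exact D.leaf_degree c ((Finset.mem_insert.mp hc).resolve_left hcx)
    leaf_injOn := by
      intro c hc c' hc' h0
      have h : (if c = x then (Sum.inr true : D.V ⊕ Bool) else Sum.inl (D.leaf c))
          = (if c' = x then Sum.inr true else Sum.inl (D.leaf c')) := h0
      by_cases hcx : c = x <;> by_cases hcx' : c' = x
      · rw [hcx, hcx']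
      · rw [if_pos hcx, if_neg hcx'] at h
        exact absurd h (by simp)
      · rw [if_neg hcx, if_pos hcx'] at h
        exact absurd h (by simp)
      · rw [if_neg hcx, if_neg hcx'] at h
        exact D.leaf_injOn ((Finset.mem_insert.mp hc).resolve_left hcx)
          ((Finset.mem_insert.mp hc').resolve_left hcx') (Sum.inl_injective h)
    leaf_surj := by
      intro v hv
      cases v with
      | inl a =>
        rw [addGraph_degree_inl hpq a] at hv
        obtain ⟨c, hcF, hca⟩ := D.leaf_surj a hv
        have hcx : c ≠ x := fun h => hx (h ▸ hcF)
        refine ⟨c, Finset.mem_insert_of_mem hcF, ?_⟩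
        show (if c = x then (Sum.inr true : D.V ⊕ Bool) else Sum.inl (D.leaf c)) = Sum.inl a
        rw [if_neg hcx, hca]
      | inr e =>
        cases e with
        | false =>
          rw [addGraph_degree_mid hpq] at hv
          omega
        | true =>
          refine ⟨x, Finset.mem_insert_self x F, ?_⟩
          show (if x = x then (Sum.inr true : D.V ⊕ Bool) else Sum.inl (D.leaf x)) = Sum.inr true
          rw [if_pos rfl]
    }⟩

end AddSurgery3

/-- deleting an element does not increase decomposition-width. -/
theorem statement_2 {α : Type} [Fintype α] (M : Matroid α) (x : α) (hx : x ∈ M.E) :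
    (M.del {x}).dw ≤ M.dw := by
  classical
  set S := M.toSetSystem with hS
  set S' := (M.del {x}).toSetSystem with hS'
  have hxS : x ∈ S.E := by
    simp only [hS, Matroid.toSetSystem, Set.Finite.mem_toFinset]
    exact hx
  have hE' : S'.E = S.E.erase x := by
    ext c
    simp only [hS, hS', Matroid.toSetSystem, Set.Finite.mem_toFinset, Matroid.del,
      Matroid.restrict_ground_eq, Set.mem_diff, Set.mem_singleton_iff, Finset.mem_erase]
    tauto
  have hInd : ∀ X : Finset α, X ∈ S'.Ind ↔ X ∈ S.Ind ∧ x ∉ X := by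
    intro X
    simp only [hS, hS', Matroid.toSetSystem, Set.mem_setOf_eq, Matroid.del,
      Matroid.restrict_indep_iff]
    constructor
    · rintro ⟨hI, hsub⟩
      exact ⟨hI, fun hxX => (hsub (Finset.mem_coe.mpr hxX)).2 rfl⟩
    · rintro ⟨hI, hxX⟩
      refine ⟨hI, fun c hc => ⟨hI.subset_ground hc, fun h => hxX ?_⟩⟩
      rw [Set.mem_singleton_iff] at h
      rw [← h]
      exact Finset.mem_coe.mp hc
  show S'.dw ≤ S.dw
  rw [SetSystem.dw, SetSystem.dw]
  set K' := {k : ℕ | ∃ D : Decomp α S'.E, ∀ U : Finset α, D.Displays U → S'.numClasses U ≤ k}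
    with hK'
  set K := {k : ℕ | ∃ D : Decomp α S.E, ∀ U : Finset α, D.Displays U → S.numClasses U ≤ k}
    with hK
  rcases Set.eq_empty_or_nonempty K' with hemp | hne
  · rw [hemp, Nat.sInf_empty]
    exact Nat.zero_le _
  · obtain ⟨k0, hk0⟩ := hne
    obtain ⟨D0, -⟩ := hk0
    have h2 : 2 ≤ S'.E.card := two_le_card_of_decomp D0
    have h3 : 3 ≤ S.E.card := by
      rw [hE', Finset.card_erase_of_mem hxS] at h2
      omega
    -- K is nonempty
    have hKne : K.Nonempty := by
      have D0' : Decomp α (S.E.erase x) := hE' ▸ D0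
      have hie : insert x (S.E.erase x) = S.E := Finset.insert_erase hxS
      obtain ⟨D1⟩ := add_surgery D0' x (Finset.notMem_erase _ _)
      have D2 : Decomp α S.E := hie ▸ D1
      refine ⟨(S.E.powerset).sup (fun U => S.numClasses U), D2, fun U hU => ?_⟩
      exact Finset.le_sup (Finset.mem_powerset.mpr hU.1)
    have hmem := Nat.sInf_mem hKne
    rw [hK, Set.mem_setOf_eq] at hmem
    obtain ⟨D, hD⟩ := hmem
    obtain ⟨D', hD'⟩ := del_surgery D x hxS h3
    apply Nat.sInf_le
    rw [hK', Set.mem_setOf_eq, hE']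
    refine ⟨D', fun U' hU' => ?_⟩
    obtain ⟨U, hUD, rfl⟩ := hD' U' hU'
    exact le_trans (numClasses_erase_le S S' x hE' hInd U) (hD U hUD)
end

section
/- Let x be an element of a finite matroid M. Then dw(M / x) ≤ dw(M), where M / x denotes the matroid obtained by contracting x. -/
open scoped Classical

namespace SurgeryAux

open SimpleGraph

variable {V : Type}

/-- Dichotomy: after deleting an edge, every vertex reachable to `p` in `G` reaches `p` or `q`. -/
lemma side_dichotomy_walk {G : SimpleGraph V} (q : V) :
    ∀ {v p : V}, G.Walk v p →
    (G.deleteEdges {s(p,q)}).Reachable v p ∨ (G.deleteEdges {s(p,q)}).Reachable v q := by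
  intro v p w
  induction w with
  | nil => exact Or.inl (Reachable.refl _)
  | @cons a b pe hab w ih =>
    by_cases he : s(a, b) = s(pe, q)
    · rw [Sym2.eq_iff] at he
      rcases he with ⟨rfl, rfl⟩ | ⟨rfl, rfl⟩
      · exact Or.inl (Reachable.refl _)
      · exact Or.inr (Reachable.refl _)
    · have hadj : (G.deleteEdges {s(pe,q)}).Adj a b := by
        rw [deleteEdges_adj]
        exact ⟨hab, by simpa using he⟩
      rcases ih with h1 | h1
      · exact Or.inl (hadj.reachable.trans h1)
      · exact Or.inr (hadj.reachable.trans h1)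

lemma side_dichotomy {G : SimpleGraph V} {p q v : V} (h : G.Reachable v p) :
    (G.deleteEdges {s(p,q)}).Reachable v p ∨ (G.deleteEdges {s(p,q)}).Reachable v q :=
  side_dichotomy_walk q h.some

/-- In an acyclic graph, the two endpoints of an edge are not reachable after deleting it. -/
lemma not_reach_of_acyclic {G : SimpleGraph V} (hG : G.IsAcyclic) {p q : V} (h : G.Adj p q) :
    ¬ (G.deleteEdges {s(p,q)}).Reachable p q := by
  have hb := (isAcyclic_iff_forall_adj_isBridge.1 hG) h
  exact isBridge_iff.1 hb

/-- Unique neighbour of a degree-one vertex. -/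
lemma eq_of_deg_one {G : SimpleGraph V} [Fintype V] [DecidableRel G.Adj] {v a b : V}
    (h : G.degree v = 1) (ha : G.Adj v a) (hb : G.Adj v b) : a = b := by
  have := Finset.card_le_one.1 (le_of_eq h)
  exact this a ((mem_neighborFinset _ _ _).2 ha) b ((mem_neighborFinset _ _ _).2 hb)

/-- Project a walk in a big graph down along an injection, assuming all edges are in the image
and adjacency reflects. -/
lemma walk_proj {A B : Type} {H : SimpleGraph A} {G : SimpleGraph B} {ι : A → B}
    (hinj : Function.Injective ι)
    (hrefl : ∀ a a' : A, G.Adj (ι a) (ι a') → H.Adj a a') :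
    ∀ {v₁ v₂ : B} (W : G.Walk v₁ v₂),
      (∀ e ∈ W.edges, ∃ a a' : A, e = s(ι a, ι a')) →
      ∀ {a b : A}, ι a = v₁ → ι b = v₂ →
      ∃ W' : H.Walk a b, W'.support.map ι = W.support ∧
        W'.edges.map (Sym2.map ι) = W.edges := by
  intro v₁ v₂ W
  induction W with
  | nil =>
    intro _ a b h₁ h₂
    obtain rfl : a = b := hinj (h₁.trans h₂.symm)
    subst h₁
    exact ⟨SimpleGraph.Walk.nil, by simp, by simp⟩
  | @cons c d v₂ hcd W ih =>
    intro he a b h₁ h₂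
    have hhead : ∃ a a' : A, s(c, d) = s(ι a, ι a') := he _ (by simp)
    obtain ⟨a₁, a₂, h12⟩ := hhead
    rw [Sym2.eq_iff] at h12
    have hd : ∃ m : A, ι m = d := by
      rcases h12 with ⟨_, h⟩ | ⟨_, h⟩
      · exact ⟨a₂, h.symm⟩
      · exact ⟨a₁, h.symm⟩
    obtain ⟨m, hm⟩ := hd
    have hadj : H.Adj a m := hrefl a m (by rw [h₁, hm]; exact hcd)
    obtain ⟨W', hs, hedge⟩ := ih (fun e heW => he e (by simp [heW])) hm h₂
    refine ⟨SimpleGraph.Walk.cons hadj W', ?_, ?_⟩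
    · simp [hs, h₁]
    · simp [hedge, h₁, hm]

/-- Lift a walk upward along a map that sends its edges to edges. -/
lemma walk_up {A B : Type} {H : SimpleGraph A} {G : SimpleGraph B} (ι : A → B) :
    ∀ {a b : A} (W : H.Walk a b), (∀ e ∈ W.edges, (Sym2.map ι e) ∈ G.edgeSet) →
      ∃ W' : G.Walk (ι a) (ι b), W'.support = W.support.map ι ∧
        W'.edges = W.edges.map (Sym2.map ι) := by
  intro a b W
  induction W with
  | nil => exact fun _ => ⟨SimpleGraph.Walk.nil, by simp, by simp⟩
  | @cons c d v₂ hcd W ih =>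
    intro he
    have hadj : G.Adj (ι c) (ι d) := by
      have := he s(c, d) (by simp)
      simpa using this
    obtain ⟨W', hs, hedge⟩ := ih (fun e heW => he e (by simp [heW]))
    exact ⟨SimpleGraph.Walk.cons hadj W', by simp [hs], by simp [hedge]⟩

end SurgeryAux

namespace Matroid

variable {α : Type}

@[simp] lemma con_ground (M : Matroid α) (C : Set α) : (M.con C).E = M.E \ C := rfl

lemma con_singleton_indep_iff (M : Matroid α) {x : α} (hx : x ∈ M.E) {J : Set α} :
    (M.con {x}).Indep J ↔ J ⊆ M.E \ {x} ∧
      ∃ B, M.IsBase B ∧ M.IsBasis (B ∩ {x}) {x} ∧ J ⊆ B := by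
  classical
  have hE' : M.E \ {x} ⊆ M✶.E := by rw [dual_ground]; exact Set.diff_subset
  rw [con, dual_indep_iff_exists']
  have hg : (M✶ ↾ (M.E \ {x})).E = M.E \ {x} := rfl
  rw [hg]
  constructor
  · rintro ⟨hJE, B', hB', hdisj⟩
    rw [isBase_restrict_iff hE'] at hB'
    obtain ⟨Bs, hBs, hB'Bs⟩ := hB'.indep.exists_isBase_superset
    have hBase : M.IsBase (M.E \ Bs) := hBs.compl_isBase_of_dual
    have hBsE : Bs ⊆ M.E := hBs.subset_ground
    have hinter : B' = Bs ∩ (M.E \ {x}) := by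
      refine hB'.eq_of_subset_indep (hBs.indep.subset Set.inter_subset_left) ?_
        Set.inter_subset_right
      exact Set.subset_inter hB'Bs hB'.subset
    refine ⟨hJE, M.E \ Bs, hBase, ?_, ?_⟩
    · have hbx : M✶.IsBasis ((M.E \ (M.E \ Bs)) ∩ (M.E \ {x})) (M.E \ {x}) := by
        rw [Set.diff_diff_cancel_left hBsE, ← hinter]
        exact hB'
      exact (hBase.inter_isBasis_iff_compl_inter_isBasis_dual
        (Set.singleton_subset_iff.2 hx)).2 hbx
    · intro j hj
      refine ⟨hJE hj |>.1, fun hjBs => ?_⟩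
      have : j ∈ B' := by rw [hinter]; exact ⟨hjBs, hJE hj⟩
      exact hdisj.ne_of_mem hj this rfl
  · rintro ⟨hJE, B, hB, hbasis, hJB⟩
    refine ⟨hJE, (M.E \ B) ∩ (M.E \ {x}), ?_, ?_⟩
    · rw [isBase_restrict_iff hE']
      exact hB.compl_inter_isBasis_of_inter_isBasis hbasis
    · exact Set.disjoint_left.2 fun a haJ ⟨⟨_, hnB⟩, _⟩ => hnB (hJB haJ)

end Matroid

namespace Matroid
variable {α : Type}

lemma con_indep_nonloop (M : Matroid α) {x : α} (hx : x ∈ M.E) (h1 : M.Indep {x}) {J : Set α} :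
    (M.con {x}).Indep J ↔ J ⊆ M.E \ {x} ∧ M.Indep (insert x J) := by
  rw [con_singleton_indep_iff M hx]
  refine and_congr_right fun hJE => ⟨?_, ?_⟩
  · rintro ⟨B, hB, hbasis, hJB⟩
    have hxB : x ∈ B := by
      by_contra hxB
      have : B ∩ {x} = ∅ := Set.inter_singleton_eq_empty.2 hxB
      rw [this] at hbasis
      have := hbasis.eq_of_subset_indep h1 (Set.empty_subset _) subset_rfl
      exact (Set.singleton_nonempty x).ne_empty this.symm
    exact hB.indep.subset (Set.insert_subset hxB hJB)
  · intro hind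
    obtain ⟨B, hB, hsub⟩ := hind.exists_isBase_superset
    have hxB : x ∈ B := hsub (Set.mem_insert _ _)
    refine ⟨B, hB, ?_, (Set.subset_insert _ _).trans hsub⟩
    have : B ∩ {x} = {x} := Set.inter_eq_right.2 (Set.singleton_subset_iff.2 hxB)
    rw [this]
    exact h1.isBasis_self

lemma con_indep_loop (M : Matroid α) {x : α} (hx : x ∈ M.E) (h1 : ¬ M.Indep {x}) {J : Set α} :
    (M.con {x}).Indep J ↔ J ⊆ M.E \ {x} ∧ M.Indep J := by
  rw [con_singleton_indep_iff M hx]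
  refine and_congr_right fun hJE => ⟨?_, ?_⟩
  · rintro ⟨B, hB, _, hJB⟩
    exact hB.indep.subset hJB
  · intro hind
    obtain ⟨B, hB, hsub⟩ := hind.exists_isBase_superset
    have hxB : x ∉ B := fun hxB => h1 (hB.indep.subset (Set.singleton_subset_iff.2 hxB))
    refine ⟨B, hB, ?_, hsub⟩
    rw [Set.inter_singleton_eq_empty.2 hxB]
    refine M.empty_indep.isBasis_of_forall_insert (Set.empty_subset _) fun e he => ?_
    have hex : e = x := by simpa using he.1
    subst hex
    exact ⟨by simpa using h1, by simpa using hx⟩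

end Matroid

section ClassesLe
variable {α : Type} [Fintype α]

lemma Matroid.mem_toSetSystem_E (M : Matroid α) (a : α) : a ∈ M.toSetSystem.E ↔ a ∈ M.E :=
  Set.Finite.mem_toFinset _

lemma Matroid.mem_toSetSystem_Ind (M : Matroid α) (Y : Finset α) :
    Y ∈ M.toSetSystem.Ind ↔ M.Indep (Y : Set α) := Iff.rfl

lemma classes_le (M : Matroid α) (x : α) (hx : x ∈ M.E)
    (U U' : Finset α) (hUE : (U : Set α) ⊆ M.E) (hU' : U' = U.erase x) :
    (M.con {x}).toSetSystem.numClasses U' ≤ M.toSetSystem.numClasses U := by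
  classical
  set N := M.con {x} with hN
  set S := M.toSetSystem with hS
  set T := N.toSetSystem with hT
  set W : Finset α := if M.Indep {x} then {x} else ∅ with hW
  have hWx : W ⊆ {x} := by
    rw [hW]; split <;> simp
  have hTE : ∀ a, a ∈ T.E ↔ a ∈ M.E ∧ a ≠ x := by
    intro a
    rw [hT, N.mem_toSetSystem_E, hN, Matroid.con_ground]
    simp
  have hSE : ∀ a, a ∈ S.E ↔ a ∈ M.E := fun a => M.mem_toSetSystem_E a
  have hTind : ∀ Y : Finset α, (Y : Set α) ⊆ M.E \ {x} →
      (Y ∈ T.Ind ↔ (Y ∪ W) ∈ S.Ind) := by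
    intro Y hY
    rw [hT, N.mem_toSetSystem_Ind, hS, M.mem_toSetSystem_Ind, hN]
    by_cases hxi : M.Indep {x}
    · rw [M.con_indep_nonloop hx hxi, and_iff_right hY, hW, if_pos hxi]
      rw [Finset.coe_union, Finset.coe_singleton, Set.union_singleton]
    · rw [M.con_indep_loop hx hxi, and_iff_right hY, hW, if_neg hxi]
      rw [Finset.union_empty]
  by_cases hxU : x ∈ U
  · -- injective map on classes
    have hU'U : U' ⊆ U := by rw [hU']; exact Finset.erase_subset _ _
    have hWU : W ⊆ U := hWx.trans (Finset.singleton_subset_iff.2 hxU)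
    have hZeq : S.E \ U = T.E \ U' := by
      ext a
      simp only [Finset.mem_sdiff]
      constructor
      · rintro ⟨haE, haU⟩
        have hax : a ≠ x := fun h => haU (h ▸ hxU)
        exact ⟨(hTE a).2 ⟨(hSE a).1 haE, hax⟩, fun h => haU (hU'U h)⟩
      · rintro ⟨haE, haU'⟩
        obtain ⟨haM, hax⟩ := (hTE a).1 haE
        refine ⟨(hSE a).2 haM, fun haU => haU' ?_⟩
        rw [hU']; exact Finset.mem_erase.2 ⟨hax, haU⟩
    have hXsub : ∀ {X Z : Finset α}, X ⊆ U' → Z ⊆ T.E \ U' → ((X ∪ Z : Finset α) : Set α) ⊆ M.E \ {x} := by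
      intro X Z hXU hZ a ha
      rw [Finset.coe_union, Set.mem_union] at ha
      rcases ha with ha | ha
      · have := hXU ha
        rw [hU'] at this
        obtain ⟨hax, haU⟩ := Finset.mem_erase.1 this
        exact ⟨hUE haU, hax⟩
      · obtain ⟨haM, hax⟩ := (hTE a).1 (Finset.mem_sdiff.1 (hZ ha)).1
        exact ⟨haM, hax⟩
    have key : ∀ X X' : {X : Finset α // X ⊆ U'},
        (T.eqvSetoid U').r X X' ↔ S.Eqv U (X.1 ∪ W) (X'.1 ∪ W) := by
      intro X X'
      constructor
      · intro h Z hZ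
        rw [hZeq] at hZ
        rw [Finset.union_right_comm, Finset.union_right_comm (X'.1)]
        rw [← hTind _ (hXsub X.2 hZ), ← hTind _ (hXsub X'.2 hZ)]
        exact h Z hZ
      · intro h Z hZ
        have hZ' : Z ⊆ S.E \ U := by rw [hZeq]; exact hZ
        rw [hTind _ (hXsub X.2 hZ), hTind _ (hXsub X'.2 hZ),
          ← Finset.union_right_comm, ← Finset.union_right_comm (X'.1)]
        exact h Z hZ'
    let g : {X : Finset α // X ⊆ U'} → {X : Finset α // X ⊆ U} :=
      fun X => ⟨X.1 ∪ W, Finset.union_subset (X.2.trans hU'U) hWU⟩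
    let F : Quotient (T.eqvSetoid U') → Quotient (S.eqvSetoid U) :=
      Quotient.map g (fun X X' h => (key X X').1 h)
    have hFinj : Function.Injective F := by
      intro a b
      refine Quotient.inductionOn₂ a b fun X X' h => ?_
      exact Quotient.sound ((key X X').2 (Quotient.exact h))
    exact Nat.card_le_card_of_injective F hFinj
  · -- surjective map on classes
    have hUU : U' = U := by rw [hU', Finset.erase_eq_of_notMem hxU]
    subst hUU
    have hXsub : ∀ {X Z : Finset α}, X ⊆ U' → Z ⊆ T.E \ U' → ((X ∪ Z : Finset α) : Set α) ⊆ M.E \ {x} := by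
      intro X Z hXU hZ a ha
      rw [Finset.coe_union, Set.mem_union] at ha
      rcases ha with ha | ha
      · exact ⟨hUE (hXU ha), fun h => hxU (h ▸ hXU ha)⟩
      · obtain ⟨haM, hax⟩ := (hTE a).1 (Finset.mem_sdiff.1 (hZ ha)).1
        exact ⟨haM, hax⟩
    have key2 : ∀ X X' : {X : Finset α // X ⊆ U'},
        (S.eqvSetoid U').r X X' → (T.eqvSetoid U').r X X' := by
      intro X X' h Z hZ
      have hZ' : Z ∪ W ⊆ S.E \ U' := by
        intro a ha
        rcases Finset.mem_union.1 ha with ha | ha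
        · obtain ⟨haE, haU⟩ := Finset.mem_sdiff.1 (hZ ha)
          exact Finset.mem_sdiff.2 ⟨(hSE a).2 ((hTE a).1 haE).1, haU⟩
        · have hax : a = x := Finset.mem_singleton.1 (hWx ha)
          subst hax
          exact Finset.mem_sdiff.2 ⟨(hSE a).2 hx, hxU⟩
      rw [hTind _ (hXsub X.2 hZ), hTind _ (hXsub X'.2 hZ),
        Finset.union_assoc, Finset.union_assoc]
      exact h (Z ∪ W) hZ'
    let F : Quotient (S.eqvSetoid U') → Quotient (T.eqvSetoid U') :=
      Quotient.map id (fun X X' h => key2 X X' h)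
    have hFsurj : Function.Surjective F := by
      intro b
      refine Quotient.inductionOn b fun X => ⟨Quotient.mk _ X, rfl⟩
    exact Nat.card_le_card_of_surjective F hFsurj

end ClassesLe

section Small
variable {α : Type}

lemma decomp_card_ge {E : Finset α} (hE : E.card ≤ 1) (D : Decomp α E) : False := by
  classical
  have hne : Nonempty D.V := D.isTree.isConnected.nonempty
  set L : Finset D.V := Finset.univ.filter (fun v => D.G.degree v = 1) with hL
  have hLone : L.card ≤ 1 := by
    refine Finset.card_le_one.2 fun v hv w hw => ?_
    obtain ⟨a, haE, hav⟩ := D.leaf_surj v (Finset.mem_filter.1 hv).2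
    obtain ⟨b, hbE, hbw⟩ := D.leaf_surj w (Finset.mem_filter.1 hw).2
    have : a = b := Finset.card_le_one.1 hE a haE b hbE
    rw [← hav, ← hbw, this]
  have hsum : ∑ v, D.G.degree v = 2 * D.G.edgeFinset.card :=
    SimpleGraph.sum_degrees_eq_twice_card_edges _
  have htree : D.G.edgeFinset.card + 1 = Fintype.card D.V := D.isTree.card_edgeFinset
  have hsplit : ∑ v ∈ L, D.G.degree v + ∑ v ∈ Finset.univ.filter (fun v => ¬ D.G.degree v = 1),
      D.G.degree v = ∑ v, D.G.degree v := Finset.sum_filter_add_sum_filter_not _ _ _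
  have h1 : ∑ v ∈ L, D.G.degree v = L.card := by
    rw [Finset.sum_congr rfl (fun v hv => (Finset.mem_filter.1 hv).2), Finset.sum_const,
      smul_eq_mul, mul_one]
  have h2 : ∑ v ∈ Finset.univ.filter (fun v => ¬ D.G.degree v = 1), D.G.degree v
      = 3 * (Finset.univ.filter (fun v => ¬ D.G.degree v = 1)).card := by
    rw [Finset.sum_congr rfl (fun v hv => ?_), Finset.sum_const, smul_eq_mul, mul_comm]
    rcases D.subcubic v with h | h
    · exact absurd h (Finset.mem_filter.1 hv).2
    · exact h
  have hcards : L.card + (Finset.univ.filter (fun v => ¬ D.G.degree v = 1)).card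
      = Fintype.card D.V := by
    rw [Finset.card_filter_add_card_filter_not, Finset.card_univ]
  have hpos : 1 ≤ Fintype.card D.V := Fintype.card_pos
  omega

lemma numClasses_le_global [Fintype α] (S : SetSystem α) (U : Finset α) :
    S.numClasses U ≤ Nat.card (Finset α) := by
  refine le_trans (Nat.card_le_card_of_surjective (Quotient.mk (S.eqvSetoid U)) ?_) ?_
  · exact fun q => Quotient.inductionOn q fun X => ⟨X, rfl⟩
  · exact Nat.card_le_card_of_injective (fun X => X.1) fun a b h => Subtype.ext h

end Small

section Rev
open SimpleGraph SurgeryAux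

variable {α : Type}

lemma rev_surgery (E : Finset α) (x : α) (hx : x ∈ E)
    (hne : (E.erase x).Nonempty) (D' : Decomp α (E.erase x)) : Nonempty (Decomp α E) := by
  classical
  obtain ⟨a₀, ha₀⟩ := hne
  set w : D'.V := D'.leaf a₀ with hwdef
  have hwdeg : D'.G.degree w = 1 := D'.leaf_degree a₀ ha₀
  set Vp := D'.V ⊕ Bool with hVp
  let Gp : SimpleGraph Vp :=
    { Adj := fun p q => match p, q with
        | .inl a, .inl b => D'.G.Adj a b
        | .inl a, .inr _ => a = w
        | .inr _, .inl b => b = w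
        | .inr _, .inr _ => False
      symm := ⟨by rintro (a | s) (b | t) h <;> simp_all <;> exact h.symm⟩
      loopless := ⟨by rintro (a | s) h <;> simp_all⟩ }
  have hadj_ll : ∀ a b : D'.V, Gp.Adj (.inl a) (.inl b) ↔ D'.G.Adj a b := fun a b => Iff.rfl
  have hadj_lr : ∀ (a : D'.V) (t : Bool), Gp.Adj (.inl a) (.inr t) ↔ a = w := fun a t => Iff.rfl
  have hadj_rl : ∀ (t : Bool) (b : D'.V), Gp.Adj (.inr t) (.inl b) ↔ b = w := fun t b => Iff.rfl
  have hadj_rr : ∀ (s t : Bool), ¬ Gp.Adj (.inr s) (.inr t) := fun s t h => h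
  -- connectivity
  have hreach : ∀ p : Vp, Gp.Reachable p (.inl w) := by
    intro p
    match p with
    | .inl a =>
      have h := (D'.isTree.isConnected a w).map
        (⟨Sum.inl, fun hab => hab⟩ : D'.G →g Gp)
      exact h
    | .inr t => exact (Adj.reachable (by exact rfl : Gp.Adj (.inr t) (.inl w)))
  have hconn : Gp.Connected := by
    rw [connected_iff]
    exact ⟨fun p q => (hreach p).trans (hreach q).symm, ⟨.inl w⟩⟩
  -- pendant edges are bridges
  have hbridge : ∀ t : Bool, ¬ (Gp.deleteEdges {s(.inl w, .inr t)}).Reachable (.inl w) (.inr t) := by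
    intro t h
    obtain ⟨W⟩ := h
    have hWr := W.reverse
    obtain ⟨z, hz, r, _⟩ := Walk.exists_eq_cons_of_ne (by simp) hWr
    rw [deleteEdges_adj] at hz
    match z, hz with
    | .inl b, hz =>
      have hbw : b = w := hz.1
      subst hbw
      exact hz.2 (by rw [Sym2.eq_swap]; rfl)
  have hpend : ∀ (v : Vp) (c : Gp.Walk v v), c.IsCycle → ∀ t : Bool,
      s(.inl w, .inr t) ∉ c.edges := by
    intro v c hc t
    have hb : Gp.IsBridge s(.inl w, .inr t) :=
      isBridge_iff.2 (hbridge t)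
    exact hb.notMem_edges_of_isCycle hc
  -- acyclicity
  have hacyc : Gp.IsAcyclic := by
    intro v c hc
    -- every edge of c joins two inl vertices
    have hedges : ∀ e ∈ c.edges, ∃ a b : D'.V, e = s(Sum.inl a, Sum.inl b) := by
      intro e he
      induction e with
      | _ p q =>
        have hadj := c.adj_of_mem_edges he
        match p, q with
        | .inl a, .inl b => exact ⟨a, b, rfl⟩
        | .inl a, .inr t =>
          have : a = w := hadj
          subst this
          exact absurd he (hpend v c hc t)
        | .inr t, .inl b =>
          have : b = w := hadj
          subst this
          rw [Sym2.eq_swap] at he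
          exact absurd he (hpend v c hc t)
        | .inr s', .inr t => exact absurd hadj (hadj_rr s' t)
    match v with
    | .inr t =>
      cases c with
      | nil => exact hc.ne_nil rfl
      | @cons _ z _ hz rest =>
        match z, hz with
        | .inl b, hz =>
          have hbw : b = w := hz
          subst hbw
          have hmem : s(Sum.inr t, Sum.inl w) ∈ (Walk.cons hz rest).edges := by simp
          rw [Sym2.eq_swap] at hmem
          exact (hpend _ _ hc t) hmem
    | .inl a =>
      obtain ⟨W', hsup, hedge⟩ := walk_proj Sum.inl_injective
        (fun a b (h : Gp.Adj (.inl a) (.inl b)) => h) c hedges rfl rfl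
      have hWcyc : W'.IsCycle := by
        rw [Walk.isCycle_def]
        refine ⟨?_, ?_, ?_⟩
        · rw [Walk.isTrail_def]
          have := hc.isTrail.edges_nodup
          rw [← hedge] at this
          exact this.of_map _
        · intro hnil
          have h3 := hc.three_le_length
          have : c.edges.length = 0 := by
            rw [← hedge, hnil]
            simp
          rw [← Walk.length_edges] at h3
          omega
        · have := hc.2
          rw [← hsup, ← List.map_tail] at this
          exact this.of_map _
      exact D'.isTree.2 W' hWcyc
  -- degrees
  have hnb_r : ∀ t : Bool, Gp.neighborFinset (.inr t) = {Sum.inl w} := by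
    intro t
    ext q
    rw [mem_neighborFinset]
    match q with
    | .inl b =>
      simp only [hadj_rl, Finset.mem_singleton]
      exact ⟨fun h => h ▸ rfl, fun h => Sum.inl_injective h⟩
    | .inr s' => simp [hadj_rr]
  have hnb_l : ∀ a : D'.V, a ≠ w → Gp.neighborFinset (.inl a)
      = (D'.G.neighborFinset a).map ⟨Sum.inl, Sum.inl_injective⟩ := by
    intro a haw
    ext q
    rw [mem_neighborFinset]
    match q with
    | .inl b =>
      simp only [hadj_ll, Finset.mem_map, Function.Embedding.coeFn_mk, mem_neighborFinset]
      exact ⟨fun h => ⟨b, h, rfl⟩, fun ⟨c, hc, hcb⟩ => Sum.inl_injective hcb ▸ hc⟩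
    | .inr t => simp [hadj_lr, haw]
  have hnb_w : Gp.neighborFinset (.inl w)
      = (D'.G.neighborFinset w).map ⟨Sum.inl, Sum.inl_injective⟩ ∪ {Sum.inr false, Sum.inr true} := by
    ext q
    rw [mem_neighborFinset]
    match q with
    | .inl b =>
      simp only [hadj_ll, Finset.mem_union, Finset.mem_map, Function.Embedding.coeFn_mk,
        mem_neighborFinset, Finset.mem_insert, Finset.mem_singleton]
      constructor
      · intro h
        exact Or.inl ⟨b, h, rfl⟩
      · rintro (⟨c, hc, hcb⟩ | h | h)
        · exact Sum.inl_injective hcb ▸ hc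
        · simp at h
        · simp at h
    | .inr t => cases t <;> simp [hadj_lr]
  have hdeg_r : ∀ t : Bool, Gp.degree (.inr t) = 1 := by
    intro t
    rw [SimpleGraph.degree, hnb_r t, Finset.card_singleton]
  have hdeg_l : ∀ a : D'.V, a ≠ w → Gp.degree (.inl a) = D'.G.degree a := by
    intro a haw
    rw [SimpleGraph.degree, hnb_l a haw, Finset.card_map]
    rfl
  have hdeg_w : Gp.degree (.inl w) = 3 := by
    rw [SimpleGraph.degree, hnb_w, Finset.card_union_of_disjoint, Finset.card_map]
    · rw [show ((D'.G.neighborFinset w).card) = 1 from hwdeg]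
      rfl
    · rw [Finset.disjoint_left]
      rintro q hq hq2
      obtain ⟨b, _, rfl⟩ := Finset.mem_map.1 hq
      simp at hq2
  -- leaf assignment
  set leafp : α → Vp := fun a => if a = x then .inr true else if a = a₀ then .inr false
      else .inl (D'.leaf a) with hleafp
  have ha₀x : a₀ ≠ x := (Finset.mem_erase.1 ha₀).1
  have ha₀E : a₀ ∈ E := (Finset.mem_erase.1 ha₀).2
  have hlp_x : leafp x = .inr true := by rw [hleafp]; simp
  have hlp_a₀ : leafp a₀ = .inr false := by rw [hleafp]; simp [ha₀x]
  have hlp_other : ∀ a, a ≠ x → a ≠ a₀ → leafp a = .inl (D'.leaf a) := by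
    intro a h1 h2; rw [hleafp]; simp [h1, h2]
  have hleafne : ∀ a ∈ E.erase x, a ≠ a₀ → D'.leaf a ≠ w := by
    intro a ha h2 heq
    exact h2 (D'.leaf_injOn ha ha₀ heq)
  refine ⟨{ V := Vp
            G := Gp
            decAdj := Classical.decRel _
            isTree := ⟨hconn, hacyc⟩
            subcubic := ?_
            leaf := leafp
            leaf_degree := ?_
            leaf_injOn := ?_
            leaf_surj := ?_ }⟩
  · intro v
    match v with
    | .inr t => exact Or.inl (hdeg_r t)
    | .inl a =>
      by_cases haw : a = w
      · subst haw; exact Or.inr hdeg_w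
      · rw [hdeg_l a haw]; exact D'.subcubic a
  · intro a haE
    by_cases h1 : a = x
    · subst h1; rw [hlp_x]; exact hdeg_r true
    by_cases h2 : a = a₀
    · subst h2; rw [hlp_a₀]; exact hdeg_r false
    · rw [hlp_other a h1 h2, hdeg_l _ (hleafne a (Finset.mem_erase.2 ⟨h1, haE⟩) h2)]
      exact D'.leaf_degree a (Finset.mem_erase.2 ⟨h1, haE⟩)
  · intro a haE b hbE hab
    simp only [Finset.mem_coe] at haE hbE
    by_cases h1 : a = x <;> by_cases h2 : b = x
    · rw [h1, h2]
    · by_cases h3 : b = a₀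
      · rw [h1, hlp_x, h3, hlp_a₀] at hab; exact absurd (Sum.inr.inj hab) (by simp)
      · rw [h1, hlp_x, hlp_other b h2 h3] at hab; exact nomatch hab
    · by_cases h3 : a = a₀
      · rw [h2, hlp_x, h3, hlp_a₀] at hab; exact absurd (Sum.inr.inj hab) (by simp)
      · rw [h2, hlp_x, hlp_other a h1 h3] at hab; exact nomatch hab
    · by_cases h3 : a = a₀ <;> by_cases h4 : b = a₀
      · rw [h3, h4]
      · rw [h3, hlp_a₀, hlp_other b h2 h4] at hab; exact nomatch hab
      · rw [h4, hlp_a₀, hlp_other a h1 h3] at hab; exact nomatch hab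
      · rw [hlp_other a h1 h3, hlp_other b h2 h4] at hab
        exact D'.leaf_injOn (by simp [Finset.mem_erase, h1, haE])
          (by simp [Finset.mem_erase, h2, hbE]) (Sum.inl.inj hab)
  · intro v hv
    match v with
    | .inr true => exact ⟨x, hx, hlp_x⟩
    | .inr false => exact ⟨a₀, ha₀E, hlp_a₀⟩
    | .inl c =>
      by_cases hcw : c = w
      · subst hcw; rw [hdeg_w] at hv; omega
      · rw [hdeg_l c hcw] at hv
        obtain ⟨a, haE', hla⟩ := D'.leaf_surj c hv
        obtain ⟨hax, haE⟩ := Finset.mem_erase.1 haE'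
        have haa₀ : a ≠ a₀ := by
          rintro rfl
          exact hcw (hla.symm.trans hwdef.symm)
        exact ⟨a, haE, by rw [hlp_other a hax haa₀, hla]⟩

end Rev

section Forward
open SimpleGraph SurgeryAux

variable {α : Type}

lemma surgery (E : Finset α) (x : α) (hx : x ∈ E) (h3 : 3 ≤ E.card) (D : Decomp α E) :
    ∃ D' : Decomp α (E.erase x), ∀ U' : Finset α, D'.Displays U' →
      ∃ U : Finset α, D.Displays U ∧ U' = U.erase x := by
  classical
  set G := D.G with hG
  have hT := D.isTree
  set ℓ : D.V := D.leaf x with hℓ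
  have hdegℓ : G.degree ℓ = 1 := D.leaf_degree x hx
  obtain ⟨u, hu⟩ := Finset.card_eq_one.1 hdegℓ
  have hadjℓu : G.Adj ℓ u := by
    rw [← mem_neighborFinset, hu]; exact Finset.mem_singleton_self u
  have hℓu : ℓ ≠ u := G.ne_of_adj hadjℓu
  have hnbrℓ : ∀ z, G.Adj ℓ z → z = u := fun z hz => eq_of_deg_one hdegℓ hz hadjℓu
  have hdegu : G.degree u = 3 := by
    rcases D.subcubic u with h1 | h1
    · exfalso
      have hwalk : ∀ {v p : D.V}, G.Walk v p → (p = ℓ ∨ p = u) → (v = ℓ ∨ v = u) := by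
        intro v p wk
        induction wk with
        | nil => exact id
        | @cons a b _ hab wk ih =>
          intro hp
          rcases ih hp with rfl | rfl
          · exact Or.inr (hnbrℓ a hab.symm)
          · exact Or.inl (eq_of_deg_one h1 hab.symm hadjℓu.symm)
      have hEcard : E.card ≤ Fintype.card D.V := by
        rw [← Finset.card_image_of_injOn D.leaf_injOn]
        exact (Finset.card_le_card (Finset.subset_univ _)).trans (le_of_eq Finset.card_univ)
      have hVcard : Fintype.card D.V ≤ 2 := by
        have hsub : (Finset.univ : Finset D.V) ⊆ {ℓ, u} := by
          intro v _
          rcases hwalk (hT.isConnected.preconnected v ℓ).some (Or.inl rfl) with h | h <;>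
            simp [h]
        calc Fintype.card D.V = Finset.univ.card := (Finset.card_univ).symm
          _ ≤ ({ℓ, u} : Finset D.V).card := Finset.card_le_card hsub
          _ ≤ 2 := (Finset.card_insert_le _ _).trans (by simp)
      omega
    · exact h1
  have hune : ((G.neighborFinset u).erase ℓ).card = 2 := by
    rw [Finset.card_erase_of_mem (by rw [mem_neighborFinset]; exact hadjℓu.symm)]
    rw [show (G.neighborFinset u).card = 3 from hdegu]
  obtain ⟨n₁, n₂, hn12, hpair⟩ := Finset.card_eq_two.1 hune
  have hn₁ : n₁ ∈ (G.neighborFinset u).erase ℓ := by rw [hpair]; simp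
  have hn₂ : n₂ ∈ (G.neighborFinset u).erase ℓ := by rw [hpair]; simp
  have hn₁ℓ : n₁ ≠ ℓ := (Finset.mem_erase.1 hn₁).1
  have hn₂ℓ : n₂ ≠ ℓ := (Finset.mem_erase.1 hn₂).1
  have hadjun₁ : G.Adj u n₁ := (mem_neighborFinset _ _ _).1 (Finset.mem_erase.1 hn₁).2
  have hadjun₂ : G.Adj u n₂ := (mem_neighborFinset _ _ _).1 (Finset.mem_erase.1 hn₂).2
  have hn₁u : n₁ ≠ u := fun h => G.loopless.irrefl u (h ▸ hadjun₁)
  have hn₂u : n₂ ≠ u := fun h => G.loopless.irrefl u (h ▸ hadjun₂)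
  have hnbru : ∀ z, G.Adj u z → z = ℓ ∨ z = n₁ ∨ z = n₂ := by
    intro z hz
    by_cases hzℓ : z = ℓ
    · exact Or.inl hzℓ
    · have hmem : z ∈ (G.neighborFinset u).erase ℓ :=
        Finset.mem_erase.2 ⟨hzℓ, (mem_neighborFinset _ _ _).2 hz⟩
      rw [hpair] at hmem
      rcases Finset.mem_insert.1 hmem with h | h
      · exact Or.inr (Or.inl h)
      · exact Or.inr (Or.inr (Finset.mem_singleton.1 h))
  have hp₀ : (Walk.cons hadjun₁.symm (Walk.cons hadjun₂ Walk.nil) : G.Walk n₁ n₂).IsPath := by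
    rw [Walk.isPath_def]
    simp [hn₁u, hn12, G.ne_of_adj hadjun₂]
  have hmid : ∀ wk : G.Walk n₁ n₂, u ∈ wk.support := by
    intro wk
    have huniq := hT.2.path_unique wk.toPath ⟨_, hp₀⟩
    have hm : u ∈ (wk.toPath : G.Walk n₁ n₂).support := by
      rw [huniq]; simp
    exact Walk.support_toPath_subset wk hm
  have hnadj : ¬ G.Adj n₁ n₂ := by
    intro h
    have huniq := hT.2.path_unique
      (⟨Walk.cons h Walk.nil, by rw [Walk.isPath_def]; simp [hn12]⟩ : G.Path n₁ n₂) ⟨_, hp₀⟩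
    have hlen := congrArg (fun pp : G.Path n₁ n₂ => pp.1.length) huniq
    simp [Walk.length_cons] at hlen
  -- the new graph
  set V' := {v : D.V // v ≠ ℓ ∧ v ≠ u} with hV'
  set G' : SimpleGraph V' :=
    { Adj := fun a b => G.Adj a.1 b.1 ∨ (a.1 = n₁ ∧ b.1 = n₂) ∨ (a.1 = n₂ ∧ b.1 = n₁)
      symm := ⟨by
        rintro a b (h | ⟨h1, h2⟩ | ⟨h1, h2⟩)
        · exact Or.inl h.symm
        · exact Or.inr (Or.inr ⟨h2, h1⟩)
        · exact Or.inr (Or.inl ⟨h2, h1⟩)⟩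
      loopless := ⟨by
        rintro a (h | ⟨h1, h2⟩ | ⟨h1, h2⟩)
        · exact G.loopless.irrefl _ h
        · exact hn12 (h1.symm.trans h2)
        · exact hn12 (h2.symm.trans h1)⟩ } with hG'def
  set n₁' : V' := ⟨n₁, hn₁ℓ, hn₁u⟩ with hn₁'
  set n₂' : V' := ⟨n₂, hn₂ℓ, hn₂u⟩ with hn₂'
  have hold : ∀ a b : V', G'.Adj a b → s(a, b) ≠ s(n₁', n₂') → G.Adj a.1 b.1 := by
    rintro a b (h | ⟨h1, h2⟩ | ⟨h1, h2⟩) hne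
    · exact h
    · exact absurd (by rw [Sym2.eq_iff]; exact Or.inl ⟨Subtype.ext h1, Subtype.ext h2⟩) hne
    · exact absurd (by rw [Sym2.eq_iff]; exact Or.inr ⟨Subtype.ext h1, Subtype.ext h2⟩) hne
  -- lifting walks avoiding ℓ and u into G'
  have hlift : ∀ {c d : D.V} (wk : G.Walk c d), (∀ z ∈ wk.support, z ≠ ℓ ∧ z ≠ u) →
      ∀ (hc : c ≠ ℓ ∧ c ≠ u) (hd : d ≠ ℓ ∧ d ≠ u), G'.Reachable ⟨c, hc⟩ ⟨d, hd⟩ := by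
    intro c d wk hsup hc hd
    have hedges : ∀ e ∈ wk.edges, ∃ a b : V', e = s(a.1, b.1) := by
      intro e he
      induction e with
      | _ c' d' =>
        have hc' := hsup c' (Walk.fst_mem_support_of_mem_edges wk he)
        have hd' := hsup d' (Walk.snd_mem_support_of_mem_edges wk he)
        exact ⟨⟨c', hc'⟩, ⟨d', hd'⟩, rfl⟩
    obtain ⟨W', _, _⟩ := walk_proj (H := G') Subtype.val_injective
      (fun (a b : V') (h : G.Adj a.1 b.1) => (Or.inl h : G'.Adj a b)) wk hedges
      (a := ⟨c, hc⟩) (b := ⟨d, hd⟩) rfl rfl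
    exact ⟨W'⟩
  -- bridge property of the new edge
  have hnewbridge : ¬ (G'.deleteEdges {s(n₁', n₂')}).Reachable n₁' n₂' := by
    rintro ⟨W⟩
    have hcond : ∀ e ∈ W.edges, Sym2.map Subtype.val e ∈ G.edgeSet := by
      intro e he
      induction e with
      | _ a b =>
        have hadj := W.adj_of_mem_edges he
        rw [deleteEdges_adj] at hadj
        exact hold a b hadj.1 (fun h => hadj.2 (by rw [h]; rfl))
    obtain ⟨W', hsup, _⟩ := walk_up Subtype.val W hcond
    have hum := hmid W'
    rw [hsup] at hum
    obtain ⟨a, _, ha2⟩ := List.mem_map.1 hum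
    exact a.2.2 ha2
  -- acyclicity
  have hG'acyc : G'.IsAcyclic := by
    intro v c hc
    by_cases hnew : s(n₁', n₂') ∈ c.edges
    · have hb : G'.IsBridge s(n₁', n₂') :=
        isBridge_iff.2 hnewbridge
      exact hb.notMem_edges_of_isCycle hc hnew
    · have hcond : ∀ e ∈ c.edges, e ∉ ({s(n₁', n₂')} : Set (Sym2 V')) := by
        intro e he hmem
        rw [Set.mem_singleton_iff] at hmem
        exact hnew (hmem ▸ he)
      have hc' := @Walk.IsCycle.toDeleteEdges V' G' v ({s(n₁', n₂')} : Set (Sym2 V')) c hc hcond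
      have hhom : ∀ {a b : V'}, (G'.deleteEdges {s(n₁', n₂')}).Adj a b → G.Adj a.1 b.1 := by
        intro a b hadj
        rw [deleteEdges_adj] at hadj
        exact hold a b hadj.1 (fun h => hadj.2 (by rw [h]; rfl))
      let f : G'.deleteEdges {s(n₁', n₂')} →g G := ⟨Subtype.val, hhom⟩
      have hcyc2 := (Walk.map_isCycle_iff_of_injective
        (f := f) Subtype.val_injective).2 hc'
      exact hT.2 _ hcyc2
  -- connectivity
  have hreach' : ∀ v : V', ∃ m : V', (m = n₁' ∨ m = n₂') ∧ G'.Reachable v m := by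
    intro v
    obtain ⟨wk0⟩ := hT.isConnected.preconnected u v.1
    have hpth := wk0.toPath.2
    obtain ⟨z, hadjz, r', hcons⟩ :=
      Walk.exists_eq_cons_of_ne (fun h => v.2.2 h.symm) (wk0.toPath : G.Walk u v.1)
    rw [hcons, Walk.cons_isPath_iff] at hpth
    obtain ⟨hr'path, hur'⟩ := hpth
    have hℓnot : ∀ (w0 : D.V) (q' : G.Walk w0 v.1), u ∉ q'.support → w0 ≠ ℓ → ℓ ∉ q'.support := by
      intro w0 q' huq hw0
      intro hmem
      obtain ⟨q₁, q₂, hq⟩ := Walk.mem_support_iff_exists_append.1 hmem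
      obtain ⟨z₃, hadjz₃, q₃, hcons₃⟩ :=
        Walk.exists_eq_cons_of_ne (fun h => v.2.1 h.symm) q₂
      have hz₃ : z₃ = u := hnbrℓ z₃ hadjz₃
      apply huq
      rw [hq]
      apply Walk.subset_support_append_right
      rw [hcons₃, Walk.support_cons]
      exact List.mem_cons_of_mem _ (hz₃ ▸ q₃.start_mem_support)
    rcases hnbru z hadjz with rfl | rfl | rfl
    · exfalso
      obtain ⟨z₂, hadjz₂, r'', hcons₂⟩ :=
        Walk.exists_eq_cons_of_ne (fun h => v.2.1 h.symm) r'
      have hz₂ : z₂ = u := hnbrℓ z₂ hadjz₂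
      apply hur'
      rw [hcons₂, Walk.support_cons]
      exact List.mem_cons_of_mem _ (hz₂ ▸ r''.start_mem_support)
    · have hℓr' : ℓ ∉ r'.support := hℓnot _ r' hur' hn₁ℓ
      have hsupcond : ∀ z' ∈ r'.support, z' ≠ ℓ ∧ z' ≠ u :=
        fun z' hz' => ⟨fun h => hℓr' (h ▸ hz'), fun h => hur' (h ▸ hz')⟩
      exact ⟨n₁', Or.inl rfl, (hlift r' hsupcond ⟨hn₁ℓ, hn₁u⟩ v.2).symm⟩
    · have hℓr' : ℓ ∉ r'.support := hℓnot _ r' hur' hn₂ℓ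
      have hsupcond : ∀ z' ∈ r'.support, z' ≠ ℓ ∧ z' ≠ u :=
        fun z' hz' => ⟨fun h => hℓr' (h ▸ hz'), fun h => hur' (h ▸ hz')⟩
      exact ⟨n₂', Or.inr rfl, (hlift r' hsupcond ⟨hn₂ℓ, hn₂u⟩ v.2).symm⟩
  have hstepn : G'.Reachable n₁' n₂' := Adj.reachable (Or.inr (Or.inl ⟨rfl, rfl⟩))
  have hreach₁ : ∀ v : V', G'.Reachable v n₁' := by
    intro v
    obtain ⟨m, hm, hvm⟩ := hreach' v
    rcases hm with rfl | rfl
    · exact hvm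
    · exact hvm.trans hstepn.symm
  have hG'conn : G'.Connected := by
    rw [connected_iff]
    exact ⟨fun a b => (hreach₁ a).trans (hreach₁ b).symm, ⟨n₁'⟩⟩
  -- degrees
  have hG'deg : ∀ v : V', G'.degree v = G.degree v.1 := by
    intro v
    rw [SimpleGraph.degree, ← Finset.card_image_of_injective _
      (Subtype.val_injective : Function.Injective (Subtype.val : V' → D.V))]
    by_cases h₁ : v.1 = n₁
    · have himg : (G'.neighborFinset v).image Subtype.val
          = insert n₂ ((G.neighborFinset n₁).erase u) := by
        ext z
        simp only [Finset.mem_image, mem_neighborFinset, Finset.mem_insert, Finset.mem_erase]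
        constructor
        · rintro ⟨b, hb, rfl⟩
          rcases hb with h | ⟨_, hb'⟩ | ⟨ha, _⟩
          · exact Or.inr ⟨b.2.2, by rwa [h₁] at h⟩
          · exact Or.inl hb'
          · exact absurd (h₁.symm.trans ha) hn12
        · rintro (rfl | ⟨hzu, hadj⟩)
          · exact ⟨n₂', Or.inr (Or.inl ⟨h₁, rfl⟩), rfl⟩
          · have hzℓ : z ≠ ℓ := by
              rintro rfl
              exact hn₁u (hnbrℓ n₁ hadj.symm)
            exact ⟨⟨z, hzℓ, hzu⟩, Or.inl (by rw [h₁]; exact hadj), rfl⟩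
      rw [himg, h₁]
      have hnotmem : n₂ ∉ (G.neighborFinset n₁).erase u := by
        intro hmem
        exact hnadj ((mem_neighborFinset _ _ _).1 (Finset.mem_erase.1 hmem).2)
      rw [Finset.card_insert_of_notMem hnotmem,
        Finset.card_erase_of_mem (by rw [mem_neighborFinset]; exact hadjun₁.symm)]
      have hpos : 0 < (G.neighborFinset n₁).card :=
        Finset.card_pos.2 ⟨u, (mem_neighborFinset _ _ _).2 hadjun₁.symm⟩
      have hdefeq : G.degree n₁ = (G.neighborFinset n₁).card := rfl
      omega
    · by_cases h₂ : v.1 = n₂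
      · have himg : (G'.neighborFinset v).image Subtype.val
            = insert n₁ ((G.neighborFinset n₂).erase u) := by
          ext z
          simp only [Finset.mem_image, mem_neighborFinset, Finset.mem_insert, Finset.mem_erase]
          constructor
          · rintro ⟨b, hb, rfl⟩
            rcases hb with h | ⟨ha, _⟩ | ⟨_, hb'⟩
            · exact Or.inr ⟨b.2.2, by rwa [h₂] at h⟩
            · exact absurd (h₂.symm.trans ha) (Ne.symm hn12)
            · exact Or.inl hb'
          · rintro (rfl | ⟨hzu, hadj⟩)
            · exact ⟨n₁', Or.inr (Or.inr ⟨h₂, rfl⟩), rfl⟩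
            · have hzℓ : z ≠ ℓ := by
                rintro rfl
                exact hn₂u (hnbrℓ n₂ hadj.symm)
              exact ⟨⟨z, hzℓ, hzu⟩, Or.inl (by rw [h₂]; exact hadj), rfl⟩
        rw [himg, h₂]
        have hnotmem : n₁ ∉ (G.neighborFinset n₂).erase u := by
          intro hmem
          exact hnadj ((mem_neighborFinset _ _ _).1 (Finset.mem_erase.1 hmem).2).symm
        rw [Finset.card_insert_of_notMem hnotmem,
          Finset.card_erase_of_mem (by rw [mem_neighborFinset]; exact hadjun₂.symm)]
        have hpos : 0 < (G.neighborFinset n₂).card :=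
          Finset.card_pos.2 ⟨u, (mem_neighborFinset _ _ _).2 hadjun₂.symm⟩
        have hdefeq : G.degree n₂ = (G.neighborFinset n₂).card := rfl
        omega
      · have himg : (G'.neighborFinset v).image Subtype.val = G.neighborFinset v.1 := by
          ext z
          simp only [Finset.mem_image, mem_neighborFinset]
          constructor
          · rintro ⟨b, hb, rfl⟩
            rcases hb with h | ⟨ha, _⟩ | ⟨ha, _⟩
            · exact h
            · exact absurd ha h₁
            · exact absurd ha h₂
          · intro hadj
            have hzℓ : z ≠ ℓ := by
              rintro rfl
              exact v.2.2 (hnbrℓ v.1 hadj.symm)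
            have hzu : z ≠ u := by
              rintro rfl
              rcases hnbru v.1 hadj.symm with h | h | h
              · exact v.2.1 h
              · exact h₁ h
              · exact h₂ h
            exact ⟨⟨z, hzℓ, hzu⟩, Or.inl hadj, rfl⟩
        rw [himg]
        rfl
  -- leaves
  have hleafmem : ∀ a ∈ E.erase x, D.leaf a ≠ ℓ ∧ D.leaf a ≠ u := by
    intro a ha
    obtain ⟨hax, haE⟩ := Finset.mem_erase.1 ha
    constructor
    · intro h
      exact hax (D.leaf_injOn haE hx h)
    · intro h
      have hd : G.degree (D.leaf a) = 1 := D.leaf_degree a haE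
      rw [h, hdegu] at hd
      omega
  set leaf' : α → V' := fun a => if h : a ∈ E.erase x then ⟨D.leaf a, hleafmem a h⟩ else n₁'
    with hleaf'
  have hleaf'eq : ∀ (a : α) (h : a ∈ E.erase x), leaf' a = ⟨D.leaf a, hleafmem a h⟩ := by
    intro a h
    rw [hleaf']
    exact dif_pos h
  refine ⟨{ V := V'
            G := G'
            isTree := ⟨hG'conn, hG'acyc⟩
            subcubic := fun v => by rw [hG'deg v]; exact D.subcubic v.1
            leaf := leaf'
            leaf_degree := ?_
            leaf_injOn := ?_
            leaf_surj := ?_ }, ?_⟩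
  · intro a ha
    show G'.degree (leaf' a) = 1
    rw [hleaf'eq a ha, hG'deg]
    exact D.leaf_degree a (Finset.mem_erase.1 ha).2
  · intro a ha b hb hab
    simp only [Finset.mem_coe] at ha hb
    have hab' : leaf' a = leaf' b := hab
    rw [hleaf'eq a ha, hleaf'eq b hb] at hab'
    exact D.leaf_injOn (Finset.mem_erase.1 ha).2 (Finset.mem_erase.1 hb).2
      (congrArg Subtype.val hab')
  · intro v hv
    have hv' : G'.degree v = 1 := hv
    rw [hG'deg] at hv'
    obtain ⟨a, haE, hla⟩ := D.leaf_surj v.1 hv'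
    have hax : a ≠ x := by
      rintro rfl
      exact v.2.1 (by rw [← hla, hℓ])
    have ha' : a ∈ E.erase x := Finset.mem_erase.2 ⟨hax, haE⟩
    exact ⟨a, ha', by rw [hleaf'eq a ha']; exact Subtype.ext hla⟩
  -- Displays correspondence
  · intro U' hU'
    obtain ⟨hU'sub, p, q, hpq, hmemU'⟩ := hU'
    by_cases holdadj : G.Adj p.1 q.1
    · -- old edge
      have htrans : ∀ (a b : V'), (G'.deleteEdges {s(p, q)}).Walk a b →
          (G.deleteEdges {s(p.1, q.1)}).Reachable a.1 b.1 := by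
        intro a b wk
        induction wk with
        | nil => exact Reachable.refl _
        | @cons a' c' b' hadj wk ih =>
          refine Reachable.trans ?_ ih
          rw [deleteEdges_adj] at hadj
          obtain ⟨hadj1, hadj2⟩ := hadj
          rcases hadj1 with h | ⟨h1, h2⟩ | ⟨h1, h2⟩
          · refine Adj.reachable ?_
            rw [deleteEdges_adj]
            refine ⟨h, fun hmem => ?_⟩
            rw [Set.mem_singleton_iff, Sym2.eq_iff] at hmem
            apply hadj2
            rw [Set.mem_singleton_iff, Sym2.eq_iff]
            rcases hmem with ⟨hh1, hh2⟩ | ⟨hh1, hh2⟩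
            · exact Or.inl ⟨Subtype.ext hh1, Subtype.ext hh2⟩
            · exact Or.inr ⟨Subtype.ext hh1, Subtype.ext hh2⟩
          · have s1 : (G.deleteEdges {s(p.1, q.1)}).Adj a'.1 u := by
              rw [deleteEdges_adj]
              refine ⟨by rw [h1]; exact hadjun₁.symm, fun hmem => ?_⟩
              rw [Set.mem_singleton_iff, Sym2.eq_iff] at hmem
              rcases hmem with ⟨_, hh2⟩ | ⟨_, hh2⟩
              · exact q.2.2 hh2.symm
              · exact p.2.2 hh2.symm
            have s2 : (G.deleteEdges {s(p.1, q.1)}).Adj u c'.1 := by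
              rw [deleteEdges_adj]
              refine ⟨by rw [h2]; exact hadjun₂, fun hmem => ?_⟩
              rw [Set.mem_singleton_iff, Sym2.eq_iff] at hmem
              rcases hmem with ⟨hh1, _⟩ | ⟨hh1, _⟩
              · exact p.2.2 hh1.symm
              · exact q.2.2 hh1.symm
            exact s1.reachable.trans s2.reachable
          · have s1 : (G.deleteEdges {s(p.1, q.1)}).Adj a'.1 u := by
              rw [deleteEdges_adj]
              refine ⟨by rw [h1]; exact hadjun₂.symm, fun hmem => ?_⟩
              rw [Set.mem_singleton_iff, Sym2.eq_iff] at hmem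
              rcases hmem with ⟨_, hh2⟩ | ⟨_, hh2⟩
              · exact q.2.2 hh2.symm
              · exact p.2.2 hh2.symm
            have s2 : (G.deleteEdges {s(p.1, q.1)}).Adj u c'.1 := by
              rw [deleteEdges_adj]
              refine ⟨by rw [h2]; exact hadjun₁, fun hmem => ?_⟩
              rw [Set.mem_singleton_iff, Sym2.eq_iff] at hmem
              rcases hmem with ⟨hh1, _⟩ | ⟨hh1, _⟩
              · exact p.2.2 hh1.symm
              · exact q.2.2 hh1.symm
            exact s1.reachable.trans s2.reachable
      have hkey : ∀ v : V', ((G'.deleteEdges {s(p, q)}).Reachable v p ↔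
          (G.deleteEdges {s(p.1, q.1)}).Reachable v.1 p.1) := by
        intro v
        constructor
        · rintro ⟨wk⟩
          exact htrans _ _ wk
        · intro hgr
          rcases side_dichotomy (q := q) (hG'conn.preconnected v p) with h | h
          · exact h
          · exfalso
            have h2 := htrans _ _ h.some
            exact not_reach_of_acyclic hT.2 holdadj (hgr.symm.trans h2)
      refine ⟨E.filter (fun a => (G.deleteEdges {s(p.1, q.1)}).Reachable (D.leaf a) p.1),
        ⟨Finset.filter_subset _ _, p.1, q.1, holdadj, fun a ha => ?_⟩, ?_⟩
      · exact Finset.mem_filter.trans (and_iff_right ha)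
      · ext a
        simp only [Finset.mem_erase, Finset.mem_filter]
        constructor
        · intro haU'
          have ha' := hU'sub haU'
          obtain ⟨hax, haE⟩ := Finset.mem_erase.1 ha'
          have hre : (G'.deleteEdges {s(p, q)}).Reachable (leaf' a) p := (hmemU' a ha').1 haU'
          rw [hleaf'eq a ha'] at hre
          exact ⟨hax, haE, (hkey ⟨D.leaf a, hleafmem a ha'⟩).1 hre⟩
        · rintro ⟨hax, haE, hre⟩
          have ha' : a ∈ E.erase x := Finset.mem_erase.2 ⟨hax, haE⟩
          refine (hmemU' a ha').2 ?_
          show (G'.deleteEdges {s(p, q)}).Reachable (leaf' a) p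
          rw [hleaf'eq a ha']
          exact (hkey ⟨D.leaf a, hleafmem a ha'⟩).2 hre
    · -- new edge
      have hpqnew : (p.1 = n₁ ∧ q.1 = n₂) ∨ (p.1 = n₂ ∧ q.1 = n₁) := by
        rcases hpq with h | h | h
        · exact absurd h holdadj
        · exact Or.inl h
        · exact Or.inr h
      have hadjpu : G.Adj p.1 u := by
        rcases hpqnew with ⟨h, _⟩ | ⟨h, _⟩
        · rw [h]; exact hadjun₁.symm
        · rw [h]; exact hadjun₂.symm
      have hadjuq : G.Adj u q.1 := by
        rcases hpqnew with ⟨_, h⟩ | ⟨_, h⟩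
        · rw [h]; exact hadjun₂
        · rw [h]; exact hadjun₁
      have hqp : q.1 ≠ p.1 := by
        rcases hpqnew with ⟨h1, h2⟩ | ⟨h1, h2⟩
        · rw [h1, h2]; exact Ne.symm hn12
        · rw [h1, h2]; exact hn12
      have hsnew : s(p, q) = s(n₁', n₂') := by
        rcases hpqnew with ⟨h1, h2⟩ | ⟨h1, h2⟩
        · rw [Sym2.eq_iff]
          exact Or.inl ⟨Subtype.ext h1, Subtype.ext h2⟩
        · rw [Sym2.eq_iff]
          exact Or.inr ⟨Subtype.ext h1, Subtype.ext h2⟩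
      have htrans : ∀ (a b : V'), (G'.deleteEdges {s(p, q)}).Walk a b →
          (G.deleteEdges {s(p.1, u)}).Reachable a.1 b.1 := by
        intro a b wk
        induction wk with
        | nil => exact Reachable.refl _
        | @cons a' c' b' hadj wk ih =>
          refine Reachable.trans ?_ ih
          rw [deleteEdges_adj] at hadj
          obtain ⟨hadj1, hadj2⟩ := hadj
          rcases hadj1 with h | ⟨h1, h2⟩ | ⟨h1, h2⟩
          · refine Adj.reachable ?_
            rw [deleteEdges_adj]
            refine ⟨h, fun hmem => ?_⟩
            rw [Set.mem_singleton_iff, Sym2.eq_iff] at hmem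
            rcases hmem with ⟨_, hh2⟩ | ⟨hh1, _⟩
            · exact c'.2.2 hh2
            · exact a'.2.2 hh1
          · exact absurd (by
              rw [Set.mem_singleton_iff, hsnew, Sym2.eq_iff]
              exact Or.inl ⟨Subtype.ext h1, Subtype.ext h2⟩) hadj2
          · exact absurd (by
              rw [Set.mem_singleton_iff, hsnew, Sym2.eq_iff]
              exact Or.inr ⟨Subtype.ext h1, Subtype.ext h2⟩) hadj2
      have hkey : ∀ v : V', ((G'.deleteEdges {s(p, q)}).Reachable v p ↔
          (G.deleteEdges {s(p.1, u)}).Reachable v.1 p.1) := by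
        intro v
        constructor
        · rintro ⟨wk⟩
          exact htrans _ _ wk
        · intro hgr
          rcases side_dichotomy (q := q) (hG'conn.preconnected v p) with h | h
          · exact h
          · exfalso
            have h2 := htrans _ _ h.some
            have hqu : (G.deleteEdges {s(p.1, u)}).Adj q.1 u := by
              rw [deleteEdges_adj]
              refine ⟨hadjuq.symm, fun hmem => ?_⟩
              rw [Set.mem_singleton_iff, Sym2.eq_iff] at hmem
              rcases hmem with ⟨hh1, _⟩ | ⟨hh1, _⟩
              · exact hqp hh1
              · exact q.2.2 hh1
            have hru : (G.deleteEdges {s(p.1, u)}).Reachable p.1 u :=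
              (hgr.symm.trans (h2.trans hqu.reachable))
            exact not_reach_of_acyclic hT.2 hadjpu hru
      refine ⟨E.filter (fun a => (G.deleteEdges {s(p.1, u)}).Reachable (D.leaf a) p.1),
        ⟨Finset.filter_subset _ _, p.1, u, hadjpu, fun a ha => ?_⟩, ?_⟩
      · exact Finset.mem_filter.trans (and_iff_right ha)
      · ext a
        simp only [Finset.mem_erase, Finset.mem_filter]
        constructor
        · intro haU'
          have ha' := hU'sub haU'
          obtain ⟨hax, haE⟩ := Finset.mem_erase.1 ha'
          have hre : (G'.deleteEdges {s(p, q)}).Reachable (leaf' a) p := (hmemU' a ha').1 haU'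
          rw [hleaf'eq a ha'] at hre
          exact ⟨hax, haE, (hkey ⟨D.leaf a, hleafmem a ha'⟩).1 hre⟩
        · rintro ⟨hax, haE, hre⟩
          have ha' : a ∈ E.erase x := Finset.mem_erase.2 ⟨hax, haE⟩
          refine (hmemU' a ha').2 ?_
          show (G'.deleteEdges {s(p, q)}).Reachable (leaf' a) p
          rw [hleaf'eq a ha']
          exact (hkey ⟨D.leaf a, hleafmem a ha'⟩).2 hre

end Forward

/-- contracting an element does not increase decomposition-width. -/
theorem statement_3 {α : Type} [Fintype α] (M : Matroid α) (x : α) (hx : x ∈ M.E) :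
    (M.con {x}).dw ≤ M.dw := by
  classical
  have hxE : x ∈ M.toSetSystem.E := (M.mem_toSetSystem_E x).2 hx
  have hE' : (M.con {x}).toSetSystem.E = M.toSetSystem.E.erase x := by
    ext a
    rw [Finset.mem_erase, (M.con {x}).mem_toSetSystem_E, M.mem_toSetSystem_E]
    rw [Matroid.con_ground]
    simp only [Set.mem_diff, Set.mem_singleton_iff]
    tauto
  unfold Matroid.dw SetSystem.dw
  rw [hE']
  set S := M.toSetSystem with hS
  set S' := (M.con {x}).toSetSystem with hS'
  set K : Set ℕ := {k | ∃ D : Decomp α S.E, ∀ U, D.Displays U → S.numClasses U ≤ k} with hK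
  set K' : Set ℕ := {k | ∃ D : Decomp α (S.E.erase x), ∀ U, D.Displays U → S'.numClasses U ≤ k}
    with hK'
  by_cases h3 : 3 ≤ S.E.card
  · rcases K.eq_empty_or_nonempty with hKe | hKne
    · have hK'e : K' = ∅ := by
        rw [Set.eq_empty_iff_forall_notMem]
        rintro k ⟨D', _⟩
        have hne : (S.E.erase x).Nonempty := by
          refine Finset.card_pos.1 ?_
          rw [Finset.card_erase_of_mem hxE]
          omega
        obtain ⟨D⟩ := rev_surgery S.E x hxE hne D'
        have hmem : (Nat.card (Finset α)) ∈ K := ⟨D, fun U _ => numClasses_le_global S U⟩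
        rw [hKe] at hmem
        exact hmem
      rw [hKe, hK'e]
    · obtain ⟨D, hD⟩ := Nat.sInf_mem hKne
      refine Nat.sInf_le ?_
      obtain ⟨D', hcorr⟩ := surgery S.E x hxE h3 D
      refine ⟨D', fun U' hU' => ?_⟩
      obtain ⟨U, hUdisp, hU'eq⟩ := hcorr U' hU'
      refine le_trans (classes_le M x hx U U' ?_ hU'eq) (hD U hUdisp)
      intro a ha
      exact (M.mem_toSetSystem_E a).1 (hUdisp.1 ha)
  · have hsmall : (S.E.erase x).card ≤ 1 := by
      rw [Finset.card_erase_of_mem hxE]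
      omega
    have hK'e : K' = ∅ := by
      rw [Set.eq_empty_iff_forall_notMem]
      rintro k ⟨D', _⟩
      exact decomp_card_ge hsmall D'
    rw [hK'e, Nat.sInf_empty]
    exact Nat.zero_le _
end

section
/- Let M be a finite matroid and let U be a subset of E(M). Then the equivalence relation ∼_U (with respect to the set-system (E(M), 𝓘(M)) of independent sets of M) has at least λ_M(U) + 1 equivalence classes. -/
open scoped Classical

namespace Matroid

variable {α : Type} [Fintype α]

lemma rank_exists (M : Matroid α) (S : Set α) :
    ∃ X : Finset α, ↑X ⊆ S ∧ M.Indep ↑X ∧ X.card = M.rank S ∧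
      ∀ Y : Finset α, ↑Y ⊆ S → M.Indep ↑Y → Y.card ≤ M.rank S := by
  have hbdd : BddAbove {n : ℕ | ∃ X : Finset α, ↑X ⊆ S ∧ M.Indep ↑X ∧ X.card = n} := by
    refine ⟨Fintype.card α, fun n hn => ?_⟩
    obtain ⟨X, -, -, rfl⟩ := hn
    exact X.card_le_univ
  have hne : Set.Nonempty {n : ℕ | ∃ X : Finset α, ↑X ⊆ S ∧ M.Indep ↑X ∧ X.card = n} :=
    ⟨0, ∅, by simp [M.empty_indep]⟩
  have hmem := Nat.sSup_mem hne hbdd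
  obtain ⟨X, hXS, hXi, hXc⟩ := hmem
  exact ⟨X, hXS, hXi, hXc, fun Y hYS hYi => le_csSup hbdd ⟨Y, hYS, hYi, rfl⟩⟩

omit [Fintype α] in
lemma extend_indep (M : Matroid α) (S : Set α) :
    ∀ n : ℕ, ∀ W X : Finset α, ↑W ⊆ S → M.Indep ↑W → ↑X ⊆ S → M.Indep ↑X →
      X.card + n = W.card →
      ∃ Y : Finset α, X ⊆ Y ∧ ↑Y ⊆ S ∧ M.Indep ↑Y ∧ Y.card = W.card := by
  intro n
  induction n with
  | zero =>
    intro W X _ _ hXS hXi h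
    exact ⟨X, subset_rfl, hXS, hXi, by omega⟩
  | succ n ih =>
    intro W X hWS hWi hXS hXi h
    have hlt : (↑X : Set α).encard < (↑W : Set α).encard := by
      rw [Set.encard_coe_eq_coe_finsetCard, Set.encard_coe_eq_coe_finsetCard]
      exact_mod_cast (by omega : X.card < W.card)
    obtain ⟨e, he, hei⟩ := hXi.augment hWi hlt
    have heX : e ∉ X := by simpa using he.2
    have heW : e ∈ W := by simpa using he.1
    obtain ⟨Y, hXY, h1, h2, h3⟩ := ih W (insert e X) hWS hWi
      (by push_cast; exact Set.insert_subset (hWS (by exact_mod_cast heW)) hXS)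
      (by rw [Finset.coe_insert]; exact hei)
      (by rw [Finset.card_insert_of_notMem heX]; omega)
    exact ⟨Y, (Finset.subset_insert e X).trans hXY, h1, h2, h3⟩

end Matroid

/-- Proposition `healer`: `∼_U` has at least `λ_M(U) + 1` equivalence
classes. -/
theorem statement_5 {α : Type} [Fintype α] (M : Matroid α) (U : Finset α)
    (hU : ↑U ⊆ M.E) :
    M.lambda ↑U + 1 ≤ M.toSetSystem.numClasses U := by
  classical
  set S := M.toSetSystem with hSdef
  obtain ⟨J, hJS, hJi, hJc, hJmax⟩ := M.rank_exists (M.E \ ↑U)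
  obtain ⟨W, hWS, hWi, hWc, hWmax⟩ := M.rank_exists M.E
  have hJW : J.card ≤ W.card := by
    have := hWmax J (hJS.trans Set.diff_subset) hJi; omega
  obtain ⟨BB, hJBB, hBBS, hBBi, hBBc⟩ := M.extend_indep M.E (W.card - J.card) W J hWS hWi
    (hJS.trans Set.diff_subset) hJi (by omega)
  -- the part of BB outside U is exactly J
  have hfil : BB.filter (fun x => x ∉ U) = J := by
    refine (Finset.eq_of_subset_of_card_le ?_ ?_).symm
    · intro x hx
      refine Finset.mem_filter.2 ⟨hJBB hx, fun hxU => ?_⟩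
      exact (hJS (Finset.mem_coe.2 hx)).2 (Finset.mem_coe.2 hxU)
    · have hsub : ↑(BB.filter (fun x => x ∉ U)) ⊆ M.E \ ↑U := by
        intro x hx
        simp only [Finset.coe_filter, Set.mem_setOf_eq] at hx
        exact ⟨hBBS (Finset.mem_coe.2 hx.1), by simpa using hx.2⟩
      have hind : M.Indep ↑(BB.filter (fun x => x ∉ U)) :=
        hBBi.subset (by exact_mod_cast Finset.filter_subset _ _)
      have := hJmax _ hsub hind
      omega
  set B0 : Finset α := BB \ J with hB0def
  have hB0U : ↑B0 ⊆ (↑U : Set α) := by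
    intro x hx
    obtain ⟨hx1, hx2⟩ := Finset.mem_sdiff.1 (Finset.mem_coe.1 hx)
    by_contra hxU
    exact hx2 (hfil ▸ Finset.mem_filter.2 ⟨hx1, by simpa using hxU⟩)
  have hB0i : M.Indep ↑B0 := hBBi.subset (by exact_mod_cast Finset.sdiff_subset)
  have hB0c : J.card + B0.card = W.card := by
    have h1 : B0.card = BB.card - J.card := by
      rw [hB0def]; exact Finset.card_sdiff_of_subset hJBB
    have h2 := Finset.card_le_card hJBB
    omega
  obtain ⟨WU, hWUS, hWUi, hWUc, hWUmax⟩ := M.rank_exists ↑U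
  have hB0WU : B0.card ≤ WU.card := by
    have := hWUmax B0 hB0U hB0i; omega
  obtain ⟨I, hB0I, hIUc, hIi, hIc⟩ := M.extend_indep ↑U (WU.card - B0.card) WU B0 hWUS hWUi
    hB0U hB0i (by omega)
  have hIU : I ⊆ U := fun x hx => Finset.mem_coe.1 (hIUc (Finset.mem_coe.2 hx))
  set n : ℕ := I.card - B0.card with hndef
  have hB0Ic : B0.card ≤ I.card := Finset.card_le_card hB0I
  -- key claim: any X between B0 and I extends by some Z ⊆ E \ U to an independent set
  -- of full rank
  have key : ∀ X : Finset α, B0 ⊆ X → X ⊆ I →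
      ∃ Z : Finset α, ↑Z ⊆ M.E \ ↑U ∧ M.Indep ↑(X ∪ Z) ∧ X.card + Z.card = W.card := by
    intro X hB0X hXI
    set S' : Set α := ↑X ∪ (M.E \ ↑U) with hS'
    have hXU : ↑X ⊆ (↑U : Set α) := fun x hx => by
      exact Finset.mem_coe.2 (hIU (hXI (Finset.mem_coe.1 hx)))
    have hS'E : S' ⊆ M.E := Set.union_subset (hXU.trans hU) Set.diff_subset
    obtain ⟨WS, hWSS, hWSi, hWSc, hWSmax⟩ := M.rank_exists S'
    have hXi : M.Indep ↑X := hIi.subset (by exact_mod_cast hXI)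
    have hBBS' : ↑BB ⊆ S' := by
      intro x hx
      by_cases hxJ : x ∈ J
      · exact Or.inr (hJS (Finset.mem_coe.2 hxJ))
      · exact Or.inl (Finset.mem_coe.2 (hB0X (Finset.mem_sdiff.2 ⟨Finset.mem_coe.1 hx, hxJ⟩)))
    have hle1 : W.card ≤ M.rank S' := by
      have := hWSmax BB hBBS' hBBi; omega
    have hle2 : M.rank S' ≤ W.card := by
      have := hWmax WS (hWSS.trans hS'E) hWSi; omega
    have hXWS : X.card ≤ WS.card := by
      have := hWSmax X (Set.subset_union_left) hXi; omega
    obtain ⟨C, hXC, hCS', hCi, hCc⟩ := M.extend_indep S' (WS.card - X.card) WS X hWSS hWSi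
      Set.subset_union_left hXi (by omega)
    refine ⟨C \ X, ?_, ?_, ?_⟩
    · intro z hz
      obtain ⟨hz1, hz2⟩ := Finset.mem_sdiff.1 (Finset.mem_coe.1 hz)
      rcases hCS' (Finset.mem_coe.2 hz1) with h | h
      · exact absurd (Finset.mem_coe.1 h) hz2
      · exact h
    · rw [Finset.union_sdiff_of_subset hXC]; exact hCi
    · have h1 := Finset.card_sdiff_of_subset hXC
      have h2 := Finset.card_le_card hXC
      omega
  -- choose the chain
  have hchain : ∀ k : Fin (n + 1), ∃ X : Finset α, B0 ⊆ X ∧ X ⊆ I ∧ X.card = B0.card + k := by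
    intro k
    have hk : (k : ℕ) ≤ (I \ B0).card := by
      rw [Finset.card_sdiff_of_subset hB0I]
      omega
    obtain ⟨D, hD, hDc⟩ := Finset.exists_subset_card_eq hk
    refine ⟨B0 ∪ D, Finset.subset_union_left,
      Finset.union_subset hB0I (hD.trans Finset.sdiff_subset), ?_⟩
    rw [Finset.card_union_of_disjoint, hDc]
    exact Finset.disjoint_left.2 fun x hx hxD => (Finset.mem_sdiff.1 (hD hxD)).2 hx
  choose Xf hXfB0 hXfI hXfc using hchain
  letI := S.eqvSetoid U
  have hXfU : ∀ k, Xf k ⊆ U := fun k => (hXfI k).trans hIU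
  set f : Fin (n + 1) → Quotient (S.eqvSetoid U) :=
    fun k => ⟦⟨Xf k, hXfU k⟩⟧ with hfdef
  -- the crucial asymmetric step
  have main : ∀ k l : Fin (n + 1), S.Eqv U (Xf k) (Xf l) → (k : ℕ) < (l : ℕ) → False := by
    intro k l heq hlt
    obtain ⟨Z, hZ, hZi, hZc⟩ := key (Xf k) (hXfB0 k) (hXfI k)
    have hZE : Z ⊆ S.E \ U := by
      intro z hz
      have := hZ (Finset.mem_coe.2 hz)
      refine Finset.mem_sdiff.2 ⟨?_, fun h => this.2 (Finset.mem_coe.2 h)⟩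
      simp only [hSdef, Matroid.toSetSystem, Set.Finite.mem_toFinset]
      exact this.1
    have hmemk : (Xf k ∪ Z) ∈ S.Ind := by
      simp only [hSdef, Matroid.toSetSystem, Set.mem_setOf_eq]
      exact hZi
    have hmeml : (Xf l ∪ Z) ∈ S.Ind := (heq Z hZE).1 hmemk
    have hindl : M.Indep ↑(Xf l ∪ Z) := hmeml
    have hdisj : Disjoint (Xf l) Z := by
      refine Finset.disjoint_left.2 fun x hx hxZ => ?_
      exact (hZ (Finset.mem_coe.2 hxZ)).2 (Finset.mem_coe.2 (hXfU l hx))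
    have hcard : (Xf l ∪ Z).card = (Xf l).card + Z.card := Finset.card_union_of_disjoint hdisj
    have hle : (Xf l ∪ Z).card ≤ W.card := by
      have := hWmax (Xf l ∪ Z) hindl.subset_ground hindl; omega
    have hck := hXfc k
    have hcl := hXfc l
    omega
  have hinj : Function.Injective f := by
    intro k l hkl
    by_contra hne
    have hne' : (k : ℕ) ≠ (l : ℕ) := fun h => hne (Fin.ext h)
    have heq : S.Eqv U (Xf k) (Xf l) := Quotient.exact hkl
    rcases lt_or_gt_of_ne hne' with h | h
    · exact main k l heq h
    · exact main l k (fun Z hZ => (heq Z hZ).symm) h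
  have hfin : Finite (Quotient (S.eqvSetoid U)) := Quotient.finite _
  have hcount : n + 1 ≤ S.numClasses U := by
    have := Nat.card_le_card_of_injective f hinj
    simpa [SetSystem.numClasses] using this
  have hlam : M.lambda ↑U + 1 ≤ n + 1 := by
    rw [Matroid.lambda]
    omega
  exact hlam.trans hcount
end

section
/- For every finite matroid M, dw(M) ≥ bw(M); that is, the decomposition-width of M is at least its branch-width. -/
open scoped Classical

section Aux

open Set

variable {α : Type} [Fintype α]

/-- The custom rank equals the cardinality of any `Basis'`. -/
lemma Matroid.rank_eq_of_basis' (M : Matroid α) {I S : Set α}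
    (hI : M.IsBasis' I S) : M.rank S = I.ncard := by
  apply IsGreatest.csSup_eq
  constructor
  · refine ⟨(I.toFinite).toFinset, ?_, ?_, ?_⟩
    · rw [Set.Finite.coe_toFinset]; exact hI.subset
    · rw [Set.Finite.coe_toFinset]; exact hI.indep
    · exact (Set.ncard_eq_toFinset_card I I.toFinite).symm
  · rintro n ⟨X, hXS, hXind, rfl⟩
    obtain ⟨J, hJ, hXJ⟩ := hXind.subset_isBasis'_of_subset hXS
    have h1 : (↑X : Set α).ncard ≤ J.ncard := Set.ncard_le_ncard hXJ (Set.toFinite J)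
    have h2 : J.ncard = I.ncard := by
      rw [Set.ncard_def, hJ.encard_eq_encard hI, ← Set.ncard_def]
    rw [Set.ncard_coe_finset] at h1
    omega

lemma SetSystem.numClasses_le_pow (S : SetSystem α) (U : Finset α) :
    S.numClasses U ≤ 2 ^ Fintype.card α := by
  unfold SetSystem.numClasses
  calc Nat.card (Quotient (S.eqvSetoid U))
      ≤ Nat.card {X : Finset α // X ⊆ U} :=
        Nat.card_le_card_of_surjective _ Quotient.mk_surjective
    _ ≤ Nat.card (Finset α) := Nat.card_le_card_of_injective _ Subtype.val_injective
    _ = 2 ^ Fintype.card α := by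
        rw [Nat.card_eq_fintype_card, Fintype.card_finset]

lemma Matroid.lambda_lt_numClasses (M : Matroid α) (U : Finset α) (hU : ↑U ⊆ M.E) :
    M.lambda ↑U + 1 ≤ M.toSetSystem.numClasses U := by
  classical
  obtain ⟨B', hB'⟩ := M.exists_isBasis' (M.E \ ↑U)
  obtain ⟨B, hB, hB'B⟩ := hB'.indep.subset_isBasis'_of_subset hB'.indep.subset_ground
  set J : Set α := B ∩ ↑U with hJdef
  have hJB : J ⊆ B := inter_subset_left
  have hJU : J ⊆ ↑U := inter_subset_right
  have hBsplit : B = J ∪ B' := by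
    have h1 : B ∩ (M.E \ ↑U) = B' :=
      (hB'.eq_of_subset_indep (hB.indep.subset inter_subset_left)
        (subset_inter hB'B hB'.subset) inter_subset_right).symm
    rw [← h1, hJdef]
    ext x
    constructor
    · intro hx
      by_cases h : x ∈ (↑U : Set α)
      · exact Or.inl ⟨hx, h⟩
      · exact Or.inr ⟨hx, hB.subset hx, h⟩
    · rintro (h | h) <;> exact h.1
  have hdisjJB' : Disjoint J B' :=
    (Set.disjoint_sdiff_right).mono hJU hB'.subset
  obtain ⟨I, hI, hJI⟩ := (hB.indep.subset hJB).subset_isBasis'_of_subset hJU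
  set lam := (I \ J).ncard with hlam
  -- card counts
  have hBcard : B.ncard = J.ncard + B'.ncard := by
    rw [hBsplit, Set.ncard_union_eq hdisjJB' (Set.toFinite _) (Set.toFinite _)]
  have hJle : J.ncard ≤ I.ncard := Set.ncard_le_ncard hJI (Set.toFinite I)
  have hlameq : lam = I.ncard - J.ncard := by
    rw [hlam, Set.ncard_diff hJI (Set.toFinite J)]
  have hlambda : M.lambda ↑U ≤ lam := by
    have h1 : M.rank ↑U = I.ncard := M.rank_eq_of_basis' hI
    have h2 : M.rank (M.E \ ↑U) = B'.ncard := M.rank_eq_of_basis' hB'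
    have h3 : M.rank M.E = B.ncard := M.rank_eq_of_basis' hB
    unfold Matroid.lambda
    omega
  -- independent-set bound
  have hindep_le : ∀ X : Finset α, M.Indep ↑X → X.card ≤ B.ncard := by
    intro X hX
    obtain ⟨K, hK, hXK⟩ := hX.subset_isBasis'_of_subset hX.subset_ground
    have h1 : (↑X : Set α).ncard ≤ K.ncard := Set.ncard_le_ncard hXK (Set.toFinite K)
    have h2 : K.ncard = B.ncard := by
      rw [Set.ncard_def, hK.encard_eq_encard hB, ← Set.ncard_def]
    rw [Set.ncard_coe_finset] at h1
    omega
  -- enumeration of I \ J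
  set l : List α := ((I \ J).toFinite.toFinset).toList with hldef
  have hlnd : l.Nodup := Finset.nodup_toList _
  have hllen : l.length = lam := by
    rw [hldef, Finset.length_toList]
    exact (Set.ncard_eq_toFinset_card _ _).symm
  have hlsub : ∀ x ∈ l, x ∈ I \ J := by
    intro x hx
    rw [hldef, Finset.mem_toList, Set.Finite.mem_toFinset] at hx
    exact hx
  set Jf : Finset α := J.toFinite.toFinset with hJfdef
  have hJfcoe : (↑Jf : Set α) = J := Set.Finite.coe_toFinset _
  set Y : ℕ → Finset α := fun m => Jf ∪ (l.take m).toFinset with hYdef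
  have htakesub : ∀ m, ↑(l.take m).toFinset ⊆ I \ J := by
    intro m x hx
    rw [Finset.mem_coe, List.mem_toFinset] at hx
    exact hlsub x (List.mem_of_mem_take hx)
  have hYcoe : ∀ m, (↑(Y m) : Set α) = J ∪ ↑(l.take m).toFinset := by
    intro m
    rw [hYdef]
    push_cast
    rw [hJfcoe]
  have hYsubI : ∀ m, (↑(Y m) : Set α) ⊆ I := by
    intro m
    rw [hYcoe]
    exact union_subset hJI ((htakesub m).trans diff_subset)
  have hYU : ∀ m, (↑(Y m) : Set α) ⊆ ↑U := fun m => (hYsubI m).trans hI.subset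
  have hYind : ∀ m, M.Indep ↑(Y m) := fun m => hI.indep.subset (hYsubI m)
  have hYcard : ∀ m, m ≤ lam → (Y m).card = J.ncard + m := by
    intro m hm
    rw [hYdef]
    have hd : Disjoint Jf (l.take m).toFinset := by
      rw [Finset.disjoint_left]
      intro x hx hx'
      have h1 : x ∈ J := by rw [← hJfcoe]; exact_mod_cast hx
      have h2 : x ∈ I \ J := htakesub m (by exact_mod_cast hx')
      exact h2.2 h1
    rw [Finset.card_union_of_disjoint hd]
    have h1 : Jf.card = J.ncard := by
      rw [← Set.ncard_coe_finset, hJfcoe]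
    have h2 : (l.take m).toFinset.card = m := by
      rw [List.toFinset_card_of_nodup (hlnd.sublist (List.take_sublist m l))]
      rw [List.length_take]
      omega
    omega
  have hYmono : ∀ m m', m ≤ m' → Y m ⊆ Y m' := by
    intro m m' hmm'
    rw [hYdef]
    apply Finset.union_subset_union_right
    intro x hx
    rw [List.mem_toFinset] at *
    have : l.take m = (l.take m').take m := by
      rw [List.take_take, min_eq_left hmm']
    rw [this] at hx
    exact List.take_subset _ _ hx
  -- for each m, a distinguishing set Z
  have hZ : ∀ m, ∃ Z : Finset α, ↑Z ⊆ M.E \ (↑U : Set α) ∧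
      M.Indep ↑(Y m ∪ Z) ∧ (Y m ∪ Z).card = B.ncard := by
    intro m
    obtain ⟨K, hK, hYK⟩ := (hYind m).subset_isBasis'_of_subset
      (subset_union_left : (↑(Y m) : Set α) ⊆ ↑(Y m) ∪ B')
    have hBbasis : M.IsBasis' B (↑(Y m) ∪ B') := by
      refine ⟨⟨hB.indep, ?_⟩, fun K' hK' hBK' =>
        le_of_eq (hB.eq_of_subset_indep hK'.1 hBK' hK'.1.subset_ground).symm⟩
      rw [hBsplit]
      refine union_subset_union ?_ subset_rfl
      rw [hYcoe]
      exact subset_union_left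
    have hKcard : K.ncard = B.ncard := by
      rw [Set.ncard_def, hK.encard_eq_encard hBbasis, ← Set.ncard_def]
    have hKsub : K ⊆ ↑(Y m) ∪ B' := hK.subset
    refine ⟨(K \ ↑(Y m)).toFinite.toFinset, ?_, ?_, ?_⟩
    · rw [Set.Finite.coe_toFinset]
      intro x hx
      have hxB' : x ∈ B' := by
        rcases hKsub hx.1 with h | h
        · exact absurd h hx.2
        · exact h
      exact hB'.subset hxB'
    · have hcoe : (↑(Y m ∪ (K \ ↑(Y m)).toFinite.toFinset) : Set α) = K := by
        push_cast
        rw [Set.Finite.coe_toFinset]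
        exact Set.union_diff_cancel hYK
      rw [hcoe]
      exact hK.indep
    · have hcoe : (↑(Y m ∪ (K \ ↑(Y m)).toFinite.toFinset) : Set α) = K := by
        push_cast
        rw [Set.Finite.coe_toFinset]
        exact Set.union_diff_cancel hYK
      rw [← Set.ncard_coe_finset, hcoe, hKcard]
  -- the injection into the quotient
  set S := M.toSetSystem with hSdef
  have hSE : (↑S.E : Set α) = M.E := Set.Finite.coe_toFinset _
  have hSind : ∀ X : Finset α, X ∈ S.Ind ↔ M.Indep ↑X := fun X => Iff.rfl
  have hYUfin : ∀ m, Y m ⊆ U := by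
    intro m
    rw [← Finset.coe_subset]
    exact hYU m
  have hne : ∀ m m' : ℕ, m ≤ lam → m' ≤ lam → m < m' →
      ¬ S.Eqv U (Y m) (Y m') := by
    intro m m' hm hm' hlt heqv
    obtain ⟨Z, hZsub, hZind, hZcard⟩ := hZ m
    have hZfin : Z ⊆ S.E \ U := by
      rw [← Finset.coe_subset, Finset.coe_sdiff, hSE]
      exact hZsub
    have h1 : (Y m ∪ Z) ∈ S.Ind := hZind
    have h2 : (Y m' ∪ Z) ∈ S.Ind := (heqv Z hZfin).mp h1
    have h3 : M.Indep (↑(Y m' ∪ Z) : Set α) := h2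
    have hcard3 := hindep_le _ h3
    -- compute cardinalities
    have hdm : Disjoint (Y m) Z := by
      rw [Finset.disjoint_left]
      intro x hx hx'
      exact (hZsub hx').2 (hYU m hx)
    have hdm' : Disjoint (Y m') Z := by
      rw [Finset.disjoint_left]
      intro x hx hx'
      exact (hZsub hx').2 (hYU m' hx)
    rw [Finset.card_union_of_disjoint hdm] at hZcard
    rw [Finset.card_union_of_disjoint hdm'] at hcard3
    have hc1 := hYcard m hm
    have hc2 := hYcard m' hm'
    omega
  have hfin : lam + 1 ≤ S.numClasses U := by
    have hinj : Function.Injective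
        (fun m : Fin (lam + 1) =>
          (Quotient.mk (S.eqvSetoid U) ⟨Y m, hYUfin m⟩ : Quotient (S.eqvSetoid U))) := by
      intro m m' hmm'
      simp only at hmm'
      have heqv := Quotient.exact hmm'
      by_contra hne'
      rcases Nat.lt_or_ge (m : ℕ) (m' : ℕ) with h | h
      · exact hne m m' (Nat.lt_succ_iff.mp m.2) (Nat.lt_succ_iff.mp m'.2) h heqv
      · rcases Nat.lt_or_ge (m' : ℕ) (m : ℕ) with h2 | h2
        · exact hne m' m (Nat.lt_succ_iff.mp m'.2) (Nat.lt_succ_iff.mp m.2) h2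
            ((S.eqvSetoid U).symm heqv)
        · exact hne' (Fin.ext (le_antisymm h2 h))
    calc lam + 1 = Nat.card (Fin (lam + 1)) := by simp
      _ ≤ Nat.card (Quotient (S.eqvSetoid U)) := Nat.card_le_card_of_injective _ hinj
      _ = S.numClasses U := rfl
  omega

end Aux

/-- Corollary `whaler`: decomposition-width is at least branch-width. -/
theorem statement_6 {α : Type} [Fintype α] (M : Matroid α) :
    M.bw ≤ M.dw := by
  classical
  set S := M.toSetSystem with hS
  have hSE : (↑S.E : Set α) = M.E := Set.Finite.coe_toFinset _
  set dwSet := {k : ℕ | ∃ D : Decomp α S.E, ∀ U : Finset α, D.Displays U → S.numClasses U ≤ k}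
    with hdwSet
  set bwSet := {k : ℕ | ∃ D : Decomp α M.toSetSystem.E,
    ∀ U : Finset α, D.Displays U → M.lambda ↑U + 1 ≤ k} with hbwSet
  have hsub : dwSet ⊆ bwSet := by
    rintro k ⟨D, hD⟩
    refine ⟨D, fun U hU => ?_⟩
    have hUE : (↑U : Set α) ⊆ M.E := by
      rw [← hSE]
      exact_mod_cast hU.1
    exact (M.lambda_lt_numClasses U hUE).trans (hD U hU)
  by_cases h : dwSet.Nonempty
  · have hdw : M.dw ∈ dwSet := Nat.sInf_mem h
    exact Nat.sInf_le (hsub hdw)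
  · have hbw : ¬ bwSet.Nonempty := by
      rintro ⟨k, D, hD⟩
      exact h ⟨2 ^ Fintype.card α, D, fun U _ => S.numClasses_le_pow U⟩
    have h1 : M.bw = 0 := by
      rw [Matroid.bw, ← hbwSet, Set.not_nonempty_iff_eq_empty.mp hbw, Nat.sInf_empty]
    omega
end
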